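/- arXiv:1204.1933 — 5 statements merged into one kernel-verified Lean document; each statement's English description precedes it below -/
import Mathlib

section
/- For every λ > 0 and every bounded polytope P in the space of real symmetric N×N matrices (i.e., P is a bounded intersection of finitely many closed halfspaces), there exists a finite set E of nonzero integer vectors in ℤ^N such that the intersection of the Ryshkov set R_λ with P equals {G ∈ P : eᵀGe ≥ λ for all e ∈ E}. In other words, R_λ is a locally finite polytope: only finitely many of its defining inequalities are active on any bounded polytope. -/
open Matrix

/-- The quadratic form `eᵀ G e` evaluated at an integer vector `e`. -/
def intQuadForm {N : ℕ} (G : Matrix (Fin N) (Fin N) ℝ) (e : Fin N → ℤ) : ℝ :=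
  (fun i => (e i : ℝ)) ⬝ᵥ G.mulVec fun i => (e i : ℝ)

/-- The Ryshkov polytope `R_λ`: real symmetric `N×N` matrices `G` with
`eᵀGe ≥ λ` for every nonzero integer vector `e`. -/
def Ryshkov (N : ℕ) (lam : ℝ) : Set (Matrix (Fin N) (Fin N) ℝ) :=
  {G | G.IsSymm ∧ ∀ e : Fin N → ℤ, e ≠ 0 → lam ≤ intQuadForm G e}

open scoped RealInnerProductSpace

lemma dirichlet_sim (N K : ℕ) (hK : 0 < K) (v : Fin N → ℝ) :
    ∃ (q : ℤ) (x : Fin N → ℤ), 1 ≤ q ∧ q ≤ (K:ℤ)^N ∧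
      ∀ i, |(q:ℝ) * v i - (x i : ℝ)| ≤ 1 / K := by
  have hKR : (0:ℝ) < K := by exact_mod_cast hK
  set g : ℕ → Fin N → ℤ := fun t i => ⌊Int.fract ((t:ℝ) * v i) * K⌋ with hg
  have hg0 : ∀ t i, 0 ≤ g t i := fun t i =>
    Int.floor_nonneg.2 (mul_nonneg (Int.fract_nonneg _) hKR.le)
  have hgK : ∀ t i, g t i < K := by
    intro t i
    have : Int.fract ((t:ℝ) * v i) * K < 1 * K :=
      mul_lt_mul_of_pos_right (Int.fract_lt_one _) hKR
    have := Int.floor_lt.2 (show Int.fract ((t:ℝ) * v i) * K < ((K:ℤ):ℝ) by push_cast; simpa using this)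
    exact_mod_cast this
  set f : Fin (K ^ N + 1) → (Fin N → Fin K) := fun t i =>
    ⟨(g t i).toNat, by
      have h1 := hg0 t i; have h2 := hgK t i; omega⟩ with hf
  have hcard : Fintype.card (Fin N → Fin K) < Fintype.card (Fin (K ^ N + 1)) := by
    simp [Fintype.card_fun]
  obtain ⟨a, b, hab, hfab⟩ := Fintype.exists_ne_map_eq_of_card_lt f hcard
  obtain ⟨s, t, hst, hfst⟩ : ∃ s t : Fin (K ^ N + 1), (s:ℕ) < t ∧ f s = f t := by
    rcases lt_or_gt_of_ne hab with h | h
    · exact ⟨a, b, h, hfab⟩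
    · exact ⟨b, a, h, hfab.symm⟩
  have hgeq : ∀ i, g s i = g t i := by
    intro i
    have := congrFun hfst i
    have h1 := hg0 s i; have h2 := hg0 t i
    have := congrArg (fun x : Fin K => (x : ℕ)) this
    simp only [f] at this
    omega
  refine ⟨(t:ℤ) - (s:ℤ), fun i => ⌊(t:ℝ) * v i⌋ - ⌊(s:ℝ) * v i⌋, by omega, ?_, ?_⟩
  · have ht : (t:ℕ) < K ^ N + 1 := t.isLt
    have : (t:ℤ) ≤ (K:ℤ)^N := by exact_mod_cast Nat.lt_succ_iff.1 ht
    omega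
  · intro i
    set A := Int.fract (((t:ℕ):ℝ) * v i) with hA
    set B := Int.fract (((s:ℕ):ℝ) * v i) with hB
    have key : ((((t:ℤ) - (s:ℤ)):ℤ):ℝ) * v i
        - (((⌊((t:ℕ):ℝ) * v i⌋ - ⌊((s:ℕ):ℝ) * v i⌋ : ℤ)):ℝ) = A - B := by
      rw [hA, hB]; simp only [Int.fract]; push_cast; ring
    show |((((t:ℤ) - (s:ℤ)):ℤ):ℝ) * v i
        - (((⌊((t:ℕ):ℝ) * v i⌋ - ⌊((s:ℕ):ℝ) * v i⌋ : ℤ)):ℝ)| ≤ 1 / K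
    rw [key]
    have hAB : ⌊A * K⌋ = ⌊B * K⌋ := (hgeq i).symm
    have h1 : |A * K - B * K| < 1 := by
      have hA1 : (⌊A*K⌋ : ℝ) ≤ A * K := Int.floor_le _
      have hA2 : A * K < ⌊A*K⌋ + 1 := Int.lt_floor_add_one _
      have hB1 : (⌊B*K⌋ : ℝ) ≤ B * K := Int.floor_le _
      have hB2 : B * K < ⌊B*K⌋ + 1 := Int.lt_floor_add_one _
      rw [hAB] at hA1 hA2
      rw [abs_lt]; constructor <;> nlinarith
    have habs : |A - B| * K = |A * K - B * K| := by
      rw [show A*(K:ℝ) - B*K = (A-B)*K by ring, abs_mul, abs_of_pos hKR]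
    rw [le_div_iff₀ hKR]
    linarith

lemma dot_symm {N : ℕ} (G : Matrix (Fin N) (Fin N) ℝ) (hG : G.IsSymm) (x y : Fin N → ℝ) :
    (G.mulVec x) ⬝ᵥ y = (G.mulVec y) ⬝ᵥ x := by
  simp only [dotProduct, Matrix.mulVec, Finset.sum_mul]
  rw [Finset.sum_comm]
  refine Finset.sum_congr rfl fun i _ => Finset.sum_congr rfl fun j _ => ?_
  rw [hG.apply i j]
  ring

lemma eigen_min {N : ℕ} (hN : 0 < N) (G : Matrix (Fin N) (Fin N) ℝ) (hG : G.IsSymm) :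
    ∃ (μ : ℝ) (v : Fin N → ℝ),
      (∑ i, (v i)^2 = 1) ∧
      (G.mulVec v = μ • v) ∧
      (∀ x : Fin N → ℝ, μ * (∑ i, (x i)^2) ≤ x ⬝ᵥ G.mulVec x) := by
  set E := EuclideanSpace ℝ (Fin N)
  set T : E →L[ℝ] E := LinearMap.toContinuousLinearMap (Matrix.toEuclideanLin G) with hT
  have hinner : ∀ x y : E, (inner ℝ (T x) y : ℝ) = (G.mulVec (fun j => x j)) ⬝ᵥ (fun j => y j) := by
    intro x y
    rw [PiLp.inner_apply]
    simp only [RCLike.inner_apply, starRingEnd_apply, star_trivial, dotProduct]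
    refine Finset.sum_congr rfl fun i _ => ?_
    rw [mul_comm]; rfl
  have hSA : IsSelfAdjoint T := by
    rw [ContinuousLinearMap.isSelfAdjoint_iff_isSymmetric]
    intro x y
    show (inner ℝ (T x) y : ℝ) = (inner ℝ x (T y) : ℝ)
    rw [hinner, real_inner_comm, hinner, dot_symm G hG]
  have hsph : (Metric.sphere (0:E) 1).Nonempty :=
    ⟨EuclideanSpace.single ⟨0, hN⟩ 1, by
      rw [mem_sphere_iff_norm, sub_zero, EuclideanSpace.norm_single]; norm_num⟩
  obtain ⟨v, hv1, hmin⟩ := (isCompact_sphere (0:E) 1).exists_isMinOn hsph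
    T.reApplyInnerSelf_continuous.continuousOn
  have hvnorm : ‖v‖ = 1 := by simpa using hv1
  set μ : ℝ := T.reApplyInnerSelf v with hμ
  have hloc : IsLocalExtrOn T.reApplyInnerSelf (Metric.sphere (0:E) ‖v‖) v := by
    rw [hvnorm]; exact Or.inl hmin.localize
  have heig : T v = μ • v := by
    have h := hSA.eq_smul_self_of_isLocalExtrOn hloc
    rwa [show T.rayleighQuotient v = μ by
      simp [ContinuousLinearMap.rayleighQuotient, hvnorm, hμ]] at h
  have hnormsq : ∀ x : E, ‖x‖^2 = ∑ i, (x i)^2 := by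
    intro x
    rw [EuclideanSpace.norm_eq, Real.sq_sqrt (by positivity)]
    simp [sq_abs]
  have hray : ∀ x : E, μ * ‖x‖^2 ≤ (inner ℝ (T x) x : ℝ) := by
    intro x
    by_cases hx : x = 0
    · simp [hx]
    · have hxn : ‖x‖ ≠ 0 := norm_ne_zero_iff.2 hx
      have hu : (‖x‖⁻¹ • x) ∈ Metric.sphere (0:E) 1 := by
        simp [norm_smul, abs_of_nonneg (norm_nonneg x), inv_mul_cancel₀ hxn]
      have h1 : μ ≤ T.reApplyInnerSelf (‖x‖⁻¹ • x) := hmin hu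
      rw [show ((‖x‖⁻¹ : ℝ) • x : E) = ((‖x‖⁻¹ : ℝ) : ℝ) • x from rfl,
        T.reApplyInnerSelf_smul] at h1
      have h2 : T.reApplyInnerSelf x = (inner ℝ (T x) x : ℝ) := rfl
      rw [h2] at h1
      have h3 : ‖(‖x‖⁻¹ : ℝ)‖^2 = (‖x‖^2)⁻¹ := by
        rw [norm_inv, norm_norm, inv_pow]
      rw [h3] at h1
      have hx2 : (0:ℝ) < ‖x‖^2 := by positivity
      calc μ * ‖x‖^2 ≤ ((‖x‖^2)⁻¹ * (inner ℝ (T x) x : ℝ)) * ‖x‖^2 :=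
            mul_le_mul_of_nonneg_right h1 hx2.le
        _ = (inner ℝ (T x) x : ℝ) := by field_simp
  refine ⟨μ, fun i => v i, ?_, ?_, ?_⟩
  · rw [← hnormsq v, hvnorm]; norm_num
  · have := heig
    funext i
    have hi : (T v) i = (μ • v) i := by rw [this]
    have h1 : (T v) i = G.mulVec (fun j => v j) i := by
      show (LinearMap.toContinuousLinearMap (Matrix.toEuclideanLin G)) v i = _
      rw [LinearMap.coe_toContinuousLinearMap', Matrix.toEuclideanLin_apply]
    rw [h1] at hi
    exact hi
  · intro x
    set x' : E := (WithLp.equiv 2 (Fin N → ℝ)).symm x with hx'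
    have h1 := hray x'
    rw [hnormsq, hinner] at h1
    have : (fun j => x' j) = x := rfl
    rw [this] at h1
    calc μ * ∑ i, x i ^ 2 = μ * ∑ i, x' i ^2 := rfl
      _ ≤ G.mulVec x ⬝ᵥ x := h1
      _ = x ⬝ᵥ G.mulVec x := dotProduct_comm _ _

lemma quad_bound {N : ℕ} (G : Matrix (Fin N) (Fin N) ℝ) (R : ℝ)
    (hR : ∀ i j, |G i j| ≤ R) (x : Fin N → ℝ) :
    |x ⬝ᵥ G.mulVec x| ≤ ((N:ℝ)*(|R|+1)) * ∑ i, (x i)^2 := by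
  have habs : ∀ i, |G.mulVec x i| ≤ (|R|+1) * ∑ j, |x j| := by
    intro i
    calc |G.mulVec x i| = |∑ j, G i j * x j| := rfl
      _ ≤ ∑ j, |G i j * x j| := Finset.abs_sum_le_sum_abs _ _
      _ ≤ ∑ j, (|R|+1) * |x j| := by
          refine Finset.sum_le_sum fun j _ => ?_
          rw [abs_mul]
          refine mul_le_mul_of_nonneg_right ?_ (abs_nonneg _)
          calc |G i j| ≤ R := hR i j
            _ ≤ |R| := le_abs_self R
            _ ≤ |R| + 1 := by linarith
      _ = (|R|+1) * ∑ j, |x j| := by rw [Finset.mul_sum]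
  calc |x ⬝ᵥ G.mulVec x| ≤ ∑ i, |x i * G.mulVec x i| := Finset.abs_sum_le_sum_abs _ _
    _ = ∑ i, |x i| * |G.mulVec x i| := by
        refine Finset.sum_congr rfl fun i _ => abs_mul _ _
    _ ≤ ∑ i, |x i| * ((|R|+1) * ∑ j, |x j|) := by
        refine Finset.sum_le_sum fun i _ =>
          mul_le_mul_of_nonneg_left (habs i) (abs_nonneg _)
    _ = (|R|+1) * (∑ i, |x i|)^2 := by
        rw [← Finset.sum_mul]; ring
    _ ≤ (|R|+1) * ((Finset.univ (α := Fin N)).card * ∑ i, |x i|^2) := by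
        refine mul_le_mul_of_nonneg_left sq_sum_le_card_mul_sum_sq (by positivity)
    _ = (N:ℝ)*(|R|+1) * ∑ i, x i^2 := by
        simp only [sq_abs, Finset.card_univ, Fintype.card_fin]
        ring

set_option maxHeartbeats 1600000 in
lemma ryshkov_core (N : ℕ) (lam C : ℝ) (hlam : 0 < lam) (hC : 0 < C) :
    ∃ M : ℕ, 0 < M ∧ ∀ G : Matrix (Fin N) (Fin N) ℝ, G.IsSymm →
      (∀ x : Fin N → ℝ, |x ⬝ᵥ G.mulVec x| ≤ C * ∑ i, (x i)^2) →
      (∀ e : Fin N → ℤ, e ≠ 0 → (∀ i, |e i| ≤ (M:ℤ)) → lam ≤ intQuadForm G e) →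
      ∀ e : Fin N → ℤ, e ≠ 0 → lam ≤ intQuadForm G e := by
  rcases Nat.eq_zero_or_pos N with h0 | hN
  · subst h0
    exact ⟨1, one_pos, fun G _ _ _ e he => absurd (Subsingleton.elim e 0) he⟩
  obtain ⟨K, hKpos, hK2N, hKCb⟩ :
      ∃ K : ℕ, 0 < K ∧ (2*(N:ℝ) + 2 ≤ (K:ℝ)) ∧ 2*C*(N:ℝ)/lam ≤ (K:ℝ) := by
    refine ⟨2*N + 2 + ⌈2*C*N/lam⌉₊, by omega, ?_, ?_⟩
    · have : (2*N + 2 : ℕ) ≤ 2*N + 2 + ⌈2*C*N/lam⌉₊ := by omega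
      calc 2*(N:ℝ) + 2 = ((2*N+2 : ℕ) : ℝ) := by push_cast; ring
        _ ≤ _ := by exact_mod_cast this
    · calc 2*C*(N:ℝ)/lam ≤ (⌈2*C*N/lam⌉₊ : ℝ) := Nat.le_ceil _
        _ ≤ _ := by
          have : ⌈2*C*N/lam⌉₊ ≤ 2*N + 2 + ⌈2*C*N/lam⌉₊ := by omega
          exact_mod_cast this
  have hKR : (0:ℝ) < K := by exact_mod_cast hKpos
  have hK1 : (1:ℝ) ≤ K := by exact_mod_cast hKpos
  have hK4N : 4*(N:ℝ) ≤ (K:ℝ)^2 := by nlinarith [Nat.cast_nonneg (α := ℝ) N]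
  have hKC : 2*C*(N:ℝ)/lam ≤ (K:ℝ)^2 := by nlinarith
  have hCK : C*(N:ℝ)/(K:ℝ)^2 ≤ lam/2 := by
    rw [div_le_div_iff₀ (by positivity) two_pos]
    have := (div_le_iff₀ hlam).1 hKC
    nlinarith
  set KN : ℝ := (K:ℝ)^N with hKNdef
  have hKN : (1:ℝ) ≤ KN := one_le_pow₀ hK1
  have hKNpos : (0:ℝ) < KN := by linarith
  set ε : ℝ := lam/(4*KN^2) with hε
  have hεpos : 0 < ε := by positivity
  refine ⟨3*K^N, by positivity, ?_⟩
  intro G hG hbound hsmall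
  obtain ⟨μ, v, hv1, hGv, hray⟩ := eigen_min hN G hG
  have hvle : ∀ i, |v i| ≤ 1 := by
    intro i
    have h1 : v i ^ 2 ≤ ∑ j, v j ^ 2 :=
      Finset.single_le_sum (fun j _ => sq_nonneg (v j)) (Finset.mem_univ i)
    rw [hv1] at h1
    rw [abs_le]; constructor <;> nlinarith
  have hM3 : ((3*K^N : ℕ) : ℝ) = 3*KN := by push_cast; rfl
  have hμ : ε ≤ μ := by
    by_contra hlt
    push_neg at hlt
    obtain ⟨q, x, hq1, hqK, hx⟩ := dirichlet_sim N K hKpos v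
    have hqR : (1:ℝ) ≤ (q:ℝ) := by exact_mod_cast hq1
    have hqKR : (q:ℝ) ≤ KN := by
      rw [hKNdef]; exact_mod_cast hqK
    set r : Fin N → ℝ := fun i => (q:ℝ) * v i - (x i : ℝ) with hr
    have hrsq : ∑ i, (r i)^2 ≤ (N:ℝ)/(K:ℝ)^2 := by
      calc ∑ i, r i ^2 ≤ ∑ _i : Fin N, (1/(K:ℝ))^2 := by
            refine Finset.sum_le_sum fun i _ => ?_
            have h : |r i| ≤ 1/K := hx i
            calc r i ^ 2 = |r i|^2 := (sq_abs _).symm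
              _ ≤ (1/(K:ℝ))^2 := pow_le_pow_left₀ (abs_nonneg _) h 2
        _ = (N:ℝ) * (1/K)^2 := by rw [Finset.sum_const]; simp [mul_comm]
        _ = (N:ℝ)/(K:ℝ)^2 := by field_simp
    set S : ℝ := v ⬝ᵥ r with hS
    have hSsq : S^2 ≤ (N:ℝ)/(K:ℝ)^2 := by
      have h1 := Finset.sum_mul_sq_le_sq_mul_sq Finset.univ v r
      have h2 : S^2 ≤ (∑ i, v i ^2) * (∑ i, r i ^2) := h1
      rw [hv1, one_mul] at h2
      linarith
    have hSabs : |S| ≤ 1/2 := by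
      have h1 : S^2 ≤ 1/4 := by
        have : (N:ℝ)/(K:ℝ)^2 ≤ 1/4 := by
          rw [div_le_div_iff₀ (by positivity) (by norm_num)]
          linarith
        linarith
      nlinarith [abs_nonneg S, sq_abs S]
    have hxne : x ≠ 0 := by
      intro h0x
      have hri : ∀ i, r i = (q:ℝ) * v i := by
        intro i; rw [hr]; simp [h0x]
      have h1 : (q:ℝ)^2 = ∑ i, (r i)^2 := by
        calc (q:ℝ)^2 = (q:ℝ)^2 * ∑ i, (v i)^2 := by rw [hv1]; ring
          _ = ∑ i, (q:ℝ)^2 * (v i)^2 := by rw [Finset.mul_sum]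
          _ = ∑ i, (r i)^2 := Finset.sum_congr rfl fun i _ => by
              rw [hri i]; ring
      have h2 : (N:ℝ)/(K:ℝ)^2 ≤ 1/4 := by
        rw [div_le_div_iff₀ (by positivity) (by norm_num : (0:ℝ) < 4)]
        linarith
      have hq2 : (1:ℝ) ≤ (q:ℝ)^2 := by nlinarith
      linarith
    have hxbound : ∀ i, |x i| ≤ ((3*K^N : ℕ) : ℤ) := by
      intro i
      have h1 : (x i : ℝ) = (q:ℝ) * v i - r i := by rw [hr]; ring
      have h2 : |(x i : ℝ)| ≤ (q:ℝ) * |v i| + 1/K := by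
        rw [h1]
        refine le_trans (abs_sub _ _) ?_
        gcongr
        · rw [abs_mul, abs_of_pos (by linarith : (0:ℝ) < (q:ℝ))]
        · exact hx i
      have h3 : |(x i : ℝ)| ≤ 3*KN := by
        have : (q:ℝ) * |v i| ≤ KN := by
          calc (q:ℝ) * |v i| ≤ (q:ℝ) * 1 := by
                refine mul_le_mul_of_nonneg_left (hvle i) (by linarith)
            _ ≤ KN := by linarith
        have h1K : 1/(K:ℝ) ≤ 1 := by rw [div_le_one hKR]; linarith
        linarith
      rw [← hM3] at h3
      rw [← Int.cast_abs] at h3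
      exact_mod_cast h3
    have hlamQ := hsmall x hxne hxbound
    have hw : (fun i => (x i : ℝ)) = (q:ℝ) • v - r := by
      funext i
      simp [hr]
    have hQx : intQuadForm G x = μ*(q:ℝ)^2 - 2*(q:ℝ)*μ*S + (r ⬝ᵥ G.mulVec r) := by
      rw [intQuadForm, hw]
      rw [Matrix.mulVec_sub, Matrix.mulVec_smul, hGv]
      simp only [sub_dotProduct, dotProduct_sub, smul_dotProduct,
        dotProduct_smul, smul_eq_mul]
      have hvv : v ⬝ᵥ v = 1 := by
        rw [dotProduct]
        rw [← hv1]
        exact Finset.sum_congr rfl fun i _ => (sq (v i)).symm ▸ by ring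
      have hrv : r ⬝ᵥ v = S := by rw [hS, dotProduct_comm]
      have hvGr : v ⬝ᵥ G.mulVec r = μ * S := by
        rw [dotProduct_comm, dot_symm G hG r v, hGv, smul_dotProduct,
          smul_eq_mul, hS]
      rw [hvv, hvGr, hrv]
      ring
    have hQr : r ⬝ᵥ G.mulVec r ≤ lam/2 := by
      calc r ⬝ᵥ G.mulVec r ≤ |r ⬝ᵥ G.mulVec r| := le_abs_self _
        _ ≤ C * ∑ i, (r i)^2 := hbound r
        _ ≤ C * ((N:ℝ)/(K:ℝ)^2) := by
            exact mul_le_mul_of_nonneg_left hrsq hC.le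
        _ = C*(N:ℝ)/(K:ℝ)^2 := by ring
        _ ≤ lam/2 := hCK
    have hSb := abs_le.1 hSabs
    rcases le_or_gt μ 0 with hμ0 | hμ0
    · have key : μ*(q:ℝ)^2 - 2*(q:ℝ)*μ*S ≤ 0 := by
        have e1 : 0 ≤ (-(μ*(q:ℝ))) * ((q:ℝ) - 2*S) :=
          mul_nonneg (by nlinarith) (by linarith [hSb.2])
        nlinarith [e1]
      rw [hQx] at hlamQ
      linarith
    · have key : μ*(q:ℝ)^2 - 2*(q:ℝ)*μ*S ≤ 2*μ*(q:ℝ)^2 := by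
        have e1 : 0 ≤ 2*(q:ℝ)*μ := by positivity
        have e2 : (2*(q:ℝ)*μ)*(-S) ≤ (2*(q:ℝ)*μ)*(1/2) :=
          mul_le_mul_of_nonneg_left (by linarith [hSb.1]) e1
        have e3 : (q:ℝ) ≤ (q:ℝ)^2 := by nlinarith
        nlinarith [e2, mul_le_mul_of_nonneg_right e3 hμ0.le]
      have key2 : 2*μ*(q:ℝ)^2 < lam/2 := by
        have hq2KN : (q:ℝ)^2 ≤ KN^2 := by nlinarith
        have h1 : 2*μ*(q:ℝ)^2 ≤ 2*μ*KN^2 := by nlinarith [mul_le_mul_of_nonneg_left hq2KN (by positivity : (0:ℝ) ≤ 2*μ)]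
        have h2 : 2*μ*KN^2 < 2*ε*KN^2 := by nlinarith
        have h3 : 2*ε*KN^2 = lam/2 := by rw [hε]; field_simp; ring
        linarith
      rw [hQx] at hlamQ
      linarith
  -- conclusion
  intro e he
  by_cases hbig : ∀ i, |e i| ≤ ((3*K^N : ℕ) : ℤ)
  · exact hsmall e he hbig
  · push_neg at hbig
    obtain ⟨i, hi⟩ := hbig
    have h1 : ((3*K^N : ℕ) : ℝ) ≤ |(e i : ℝ)| := by
      rw [← Int.cast_abs]
      have : ((3*K^N : ℕ) : ℤ) ≤ |e i| := le_of_lt hi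
      exact_mod_cast this
    have h2 : (3*KN)^2 ≤ ∑ j, ((e j : ℝ))^2 := by
      have h3 : ((e i : ℝ))^2 ≤ ∑ j, ((e j : ℝ))^2 :=
        Finset.single_le_sum (f := fun j => ((e j : ℝ))^2)
          (fun j _ => sq_nonneg _) (Finset.mem_univ i)
      rw [hM3] at h1
      nlinarith [abs_nonneg ((e i : ℝ)), sq_abs ((e i : ℝ))]
    have h4 := hray (fun j => (e j : ℝ))
    have h5 : intQuadForm G e = (fun j => (e j:ℝ)) ⬝ᵥ G.mulVec (fun j => (e j:ℝ)) := rfl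
    rw [h5]
    have hsum0 : (0:ℝ) ≤ ∑ j, ((e j : ℝ))^2 := Finset.sum_nonneg fun j _ => sq_nonneg _
    have h6 : ε * ∑ j, ((e j:ℝ))^2 ≤ μ * ∑ j, ((e j:ℝ))^2 :=
      mul_le_mul_of_nonneg_right hμ hsum0
    have h7 : lam ≤ ε * ∑ j, ((e j:ℝ))^2 := by
      have h40 : ε * (4*KN^2) = lam := by
        rw [hε, div_mul_cancel₀ _ (by positivity : (4:ℝ)*KN^2 ≠ 0)]
      have h8 : ε * (4*KN^2) ≤ ε * (3*KN)^2 :=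
        mul_le_mul_of_nonneg_left (by nlinarith) hεpos.le
      have h9 : ε * (3*KN)^2 ≤ ε * ∑ j, ((e j:ℝ))^2 :=
        mul_le_mul_of_nonneg_left h2 hεpos.le
      linarith
    linarith

/-- The Ryshkov set `R_λ` is a locally finite polytope: for every
bounded polytope `P` in the space of real symmetric `N×N` matrices (a bounded
intersection of finitely many closed halfspaces of that space), there is a
finite set `E` of nonzero integer vectors such that
`R_λ ∩ P = {G ∈ P | eᵀGe ≥ λ for all e ∈ E}`. -/
theorem ryshkov_locally_finite_polytope (N : ℕ) (lam : ℝ) (hlam : 0 < lam)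
    (P : Set (Matrix (Fin N) (Fin N) ℝ))
    (k : ℕ) (f : Fin k → (Matrix (Fin N) (Fin N) ℝ →ₗ[ℝ] ℝ)) (b : Fin k → ℝ)
    (hP : P = {G | G.IsSymm ∧ ∀ i : Fin k, f i G ≤ b i})
    (hbdd : ∃ R : ℝ, ∀ G ∈ P, ∀ i j, |G i j| ≤ R) :
    ∃ E : Finset (Fin N → ℤ), (∀ e ∈ E, e ≠ 0) ∧
      Ryshkov N lam ∩ P = {G ∈ P | ∀ e ∈ E, lam ≤ intQuadForm G e} := by
  obtain ⟨R, hR⟩ := hbdd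
  set C : ℝ := (N:ℝ)*(|R|+1) + 1 with hC
  have hCpos : 0 < C := by positivity
  obtain ⟨M, hMpos, hcore⟩ := ryshkov_core N lam C hlam hCpos
  refine ⟨(Finset.Icc (fun _ => -(M:ℤ)) (fun _ => (M:ℤ))).erase 0,
    fun e he => Finset.ne_of_mem_erase he, ?_⟩
  have hmemE : ∀ e : Fin N → ℤ,
      (e ∈ (Finset.Icc (fun _ => -(M:ℤ)) (fun _ => (M:ℤ))).erase 0 ↔
        e ≠ 0 ∧ ∀ i, |e i| ≤ (M:ℤ)) := by
    intro e
    rw [Finset.mem_erase, Finset.mem_Icc]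
    constructor
    · rintro ⟨h1, h2, h3⟩
      exact ⟨h1, fun i => abs_le.2 ⟨h2 i, h3 i⟩⟩
    · rintro ⟨h1, h2⟩
      exact ⟨h1, fun i => (abs_le.1 (h2 i)).1, fun i => (abs_le.1 (h2 i)).2⟩
  ext G
  simp only [Set.mem_inter_iff, Set.mem_sep_iff]
  constructor
  · rintro ⟨⟨hsym, hry⟩, hGP⟩
    exact ⟨hGP, fun e he => hry e ((hmemE e).1 he).1⟩
  · rintro ⟨hGP, hQ⟩
    have hsym : G.IsSymm := by
      rw [hP] at hGP; exact hGP.1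
    have hbound : ∀ x : Fin N → ℝ, |x ⬝ᵥ G.mulVec x| ≤ C * ∑ i, (x i)^2 := by
      intro x
      calc |x ⬝ᵥ G.mulVec x| ≤ ((N:ℝ)*(|R|+1)) * ∑ i, (x i)^2 :=
            quad_bound G R (hR G hGP) x
        _ ≤ C * ∑ i, (x i)^2 := by
            refine mul_le_mul_of_nonneg_right (by rw [hC]; linarith)
              (Finset.sum_nonneg fun i _ => sq_nonneg _)
    refine ⟨⟨hsym, hcore G hsym hbound ?_⟩, hGP⟩
    intro e he hbnd
    exact hQ e ((hmemE e).2 ⟨he, hbnd⟩)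
end

section
/- Lower bound on the transmit power: let S be a real N×N diagonal matrix with positive diagonal entries, L a real invertible N×N matrix, U any orthogonal N×N matrix, and Z any unimodular integer N×N matrix. Then tr(Zᵀ Lᵀ Uᵀ S⁻² U L Z) ≥ N · (|det L| / det S)^{2/N}. -/
open Matrix

/-- A unimodular matrix: integer entries and determinant `±1`. -/
def IsUnimodular {N : ℕ} (Z : Matrix (Fin N) (Fin N) ℤ) : Prop :=
  Z.det = 1 ∨ Z.det = -1

lemma trace_eq_sum_eigenvalues' {n : Type*} [Fintype n] [DecidableEq n]
    {A : Matrix n n ℝ} (hA : A.IsHermitian) :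
    A.trace = ∑ i, hA.eigenvalues i := by
  conv_lhs => rw [hA.spectral_theorem]
  rw [Unitary.conjStarAlgAut_apply]
  rw [Matrix.trace_mul_cycle]
  have h1 : (star (hA.eigenvectorUnitary : Matrix n n ℝ)) *
      (hA.eigenvectorUnitary : Matrix n n ℝ) = 1 := Unitary.coe_star_mul_self _
  rw [h1, one_mul, Matrix.trace_diagonal]
  simp

/-- lower bound on the transmit power. For diagonal `S` with
positive entries, invertible `L`, orthogonal `U` and unimodular `Z`,
`tr(Zᵀ Lᵀ Uᵀ S⁻² U L Z) ≥ N (|det L| / det S)^{2/N}`. -/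
theorem transmit_power_lower_bound (N : ℕ) (hN : 0 < N)
    (s : Fin N → ℝ) (hs : ∀ j, 0 < s j)
    (L : Matrix (Fin N) (Fin N) ℝ) (hL : IsUnit L.det)
    (U : Matrix (Fin N) (Fin N) ℝ) (hU : Uᵀ * U = 1)
    (Z : Matrix (Fin N) (Fin N) ℤ) (hZ : IsUnimodular Z) :
    (N : ℝ) * ((|L.det| / ∏ j, s j) ^ ((2 : ℝ) / N)) ≤
      ((Z.map (Int.cast : ℤ → ℝ))ᵀ * Lᵀ * Uᵀ *
        Matrix.diagonal (fun j => 1 / (s j) ^ 2) * U * L *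
        Z.map (Int.cast : ℤ → ℝ)).trace := by
  set Z' := Z.map (Int.cast : ℤ → ℝ) with hZ'
  set M := Matrix.diagonal (fun j => 1 / s j) * U * L * Z' with hM
  have hprodpos : (0:ℝ) < ∏ j, s j := Finset.prod_pos fun j _ => hs j
  set c : ℝ := |L.det| / ∏ j, s j with hc
  have hc0 : 0 ≤ c := div_nonneg (abs_nonneg _) hprodpos.le
  -- the matrix equals Mᵀ * M
  have hdiag : Matrix.diagonal (fun j => 1 / (s j) ^ 2)
      = (Matrix.diagonal (fun j => 1 / s j))ᵀ * Matrix.diagonal (fun j => 1 / s j) := by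
    rw [Matrix.diagonal_transpose, Matrix.diagonal_mul_diagonal]
    exact congrArg Matrix.diagonal (funext fun j => by
      rw [div_mul_div_comm, one_mul, sq])
  have hkey : Z'ᵀ * Lᵀ * Uᵀ * Matrix.diagonal (fun j => 1 / (s j) ^ 2) * U * L * Z'
      = Mᵀ * M := by
    rw [hdiag, hM]
    simp only [Matrix.transpose_mul, Matrix.mul_assoc]
  rw [hkey]
  -- positive semidefiniteness and eigenvalues
  have hps : (Mᵀ * M).PosSemidef := by
    have := Matrix.posSemidef_conjTranspose_mul_self M
    rwa [Matrix.conjTranspose_eq_transpose_of_trivial] at this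
  have hH : (Mᵀ * M).IsHermitian := hps.isHermitian
  have hnn : ∀ i, 0 ≤ hH.eigenvalues i := hps.eigenvalues_nonneg
  -- determinant computation
  have hdetU : |U.det| = 1 := by
    have h2 : U.det ^ 2 = 1 := by
      have := congrArg Matrix.det hU
      rwa [Matrix.det_mul, Matrix.det_transpose, Matrix.det_one, ← sq] at this
    rcases mul_self_eq_one_iff.mp (by nlinarith [h2] : U.det * U.det = 1) with h | h <;>
      simp [h]
  have hdetZ : |Z'.det| = 1 := by
    have : Z'.det = ((Z.det : ℤ) : ℝ) := by
      exact (RingHom.map_det (Int.castRingHom ℝ) Z).symm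
    rcases hZ with h | h <;> simp [this, h]
  have hdetM : |M.det| = c := by
    rw [hM]
    simp only [Matrix.det_mul, Matrix.det_diagonal]
    rw [abs_mul, abs_mul, abs_mul, hdetU, hdetZ, hc]
    rw [Finset.abs_prod]
    have : ∏ j, |1 / s j| = (∏ j, s j)⁻¹ := by
      rw [← Finset.prod_inv_distrib]
      exact Finset.prod_congr rfl fun j _ => by rw [abs_of_pos (by have := hs j; positivity), one_div]
    rw [this]; ring
  have hdet : (Mᵀ * M).det = c ^ 2 := by
    rw [Matrix.det_mul, Matrix.det_transpose, ← sq, ← sq_abs, hdetM]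
  have hprod : ∏ i, hH.eigenvalues i = c ^ 2 := by
    have := hH.det_eq_prod_eigenvalues
    simp only [RCLike.ofReal_real_eq_id, id] at this
    rw [← hdet, this]
  -- AM-GM
  have hNne : (N:ℝ) ≠ 0 := Nat.cast_ne_zero.mpr hN.ne'
  have hAM := Real.geom_mean_le_arith_mean_weighted Finset.univ
    (fun _ => (N:ℝ)⁻¹) hH.eigenvalues (fun i _ => inv_nonneg.mpr (Nat.cast_nonneg N))
    (by simp [Finset.card_univ, mul_comm, hNne]) (fun i _ => hnn i)
  rw [trace_eq_sum_eigenvalues' hH]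
  have hlhs : ∏ i, hH.eigenvalues i ^ ((N:ℝ)⁻¹) = c ^ ((2:ℝ)/N) := by
    rw [Real.finset_prod_rpow _ _ (fun i _ => hnn i), hprod,
      ← Real.rpow_natCast c 2, ← Real.rpow_mul hc0]
    norm_num [div_eq_mul_inv]
  rw [hlhs] at hAM
  have : ∑ i, (N:ℝ)⁻¹ * hH.eigenvalues i = (N:ℝ)⁻¹ * ∑ i, hH.eigenvalues i := by
    rw [Finset.mul_sum]
  rw [this] at hAM
  calc (N:ℝ) * (c ^ ((2:ℝ)/N)) ≤ (N:ℝ) * ((N:ℝ)⁻¹ * ∑ i, hH.eigenvalues i) := by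
        apply mul_le_mul_of_nonneg_left hAM (by positivity)
    _ = ∑ i, hH.eigenvalues i := by field_simp
end

section
/- Geometric mean decomposition: for every invertible real N×N matrix A there exist orthogonal N×N matrices U and V and an upper triangular N×N matrix R whose diagonal entries are all equal to |det A|^{1/N}, such that A = U R Vᵀ. -/
open Matrix Finset

lemma eig_eq_sq_norm (n : ℕ) (A : Matrix (Fin n) (Fin n) ℝ)
    (hS : (Aᵀ * A).IsHermitian)  (i : Fin n) :
    hS.eigenvalues i = ‖(Matrix.toEuclideanLin A) (hS.eigenvectorBasis i)‖ ^ 2 := by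
  set w : EuclideanSpace ℝ (Fin n) := hS.eigenvectorBasis i with hw
  have hnw : ‖w‖ = 1 := hS.eigenvectorBasis.orthonormal.1 i
  have h1 : (Aᵀ * A) *ᵥ ⇑w = hS.eigenvalues i • ⇑w := hS.mulVec_eigenvectorBasis i
  have h2 : ‖(Matrix.toEuclideanLin A) w‖ ^ 2
      = (A *ᵥ ⇑w) ⬝ᵥ (A *ᵥ ⇑w) := by
    rw [← real_inner_self_eq_norm_sq]
    simp [PiLp.inner_apply, dotProduct]
    rw [EuclideanSpace.norm_eq, Real.sq_sqrt (Finset.sum_nonneg (fun _ _ => sq_nonneg _))]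
    simp [Matrix.toEuclideanLin_apply, Real.norm_eq_abs, sq_abs, sq]
  have h3 : (A *ᵥ ⇑w) ⬝ᵥ (A *ᵥ ⇑w) = ((Aᵀ * A) *ᵥ ⇑w) ⬝ᵥ ⇑w := by
    rw [Matrix.dotProduct_mulVec, ← Matrix.mulVec_transpose, Matrix.mulVec_mulVec,
      dotProduct_comm, Matrix.dotProduct_mulVec, ← Matrix.mulVec_transpose,
      Matrix.transpose_mul, Matrix.transpose_transpose]
  have h4 : (⇑w) ⬝ᵥ (⇑w) = 1 := by
    have := real_inner_self_eq_norm_sq w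
    rw [hnw] at this
    simp only [PiLp.inner_apply, RCLike.inner_apply, starRingEnd_apply, star_trivial,
      one_pow] at this
    simpa [dotProduct] using this
  rw [h2, h3, h1]
  simp [smul_dotProduct, h4]

lemma exists_unit_norm_mulVec (n : ℕ) (hn : 0 < n) (A : Matrix (Fin n) (Fin n) ℝ)
    (hA : A.det ≠ 0) :
    ∃ v : EuclideanSpace ℝ (Fin n), ‖v‖ = 1 ∧
      ‖(Matrix.toEuclideanLin A) v‖ = |A.det| ^ ((n : ℝ)⁻¹) := by
  set d : ℝ := |A.det| ^ ((n : ℝ)⁻¹) with hd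
  set f : EuclideanSpace ℝ (Fin n) → ℝ := fun x => ‖(Matrix.toEuclideanLin A) x‖ with hf
  have hfc : Continuous f := ((Matrix.toEuclideanLin A).continuous_of_finiteDimensional).norm
  -- a point on the sphere
  have hx₀ : (EuclideanSpace.single (⟨0, hn⟩ : Fin n) (1:ℝ)) ∈ Metric.sphere
      (0 : EuclideanSpace ℝ (Fin n)) 1 := by
    simp [EuclideanSpace.norm_single]
  obtain ⟨v₁, hv₁S, hmin⟩ := (isCompact_sphere (0 : EuclideanSpace ℝ (Fin n)) 1).exists_isMinOn
    ⟨_, hx₀⟩ hfc.continuousOn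
  obtain ⟨v₂, hv₂S, hmax⟩ := (isCompact_sphere (0 : EuclideanSpace ℝ (Fin n)) 1).exists_isMaxOn
    ⟨_, hx₀⟩ hfc.continuousOn
  have hS : (Aᵀ * A).IsHermitian := by
    have := Matrix.isHermitian_conjTranspose_mul_self A
    simpa using this
  have key : ∀ i, f v₁ ^ 2 ≤ hS.eigenvalues i ∧ hS.eigenvalues i ≤ f v₂ ^ 2 := by
    intro i
    have hw : (hS.eigenvectorBasis i : EuclideanSpace ℝ (Fin n)) ∈ Metric.sphere
        (0 : EuclideanSpace ℝ (Fin n)) 1 := by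
      simp [hS.eigenvectorBasis.orthonormal.1 i]
    have h := eig_eq_sq_norm n A hS i
    constructor
    · rw [h]; exact pow_le_pow_left₀ (norm_nonneg _) (hmin hw) 2
    · rw [h]; exact pow_le_pow_left₀ (norm_nonneg _) (hmax hw) 2
  have hdet2 : A.det ^ 2 = ∏ i, hS.eigenvalues i := by
    have := hS.det_eq_prod_eigenvalues
    rw [Matrix.det_mul, Matrix.det_transpose] at this
    simpa [sq] using this
  have ha : 0 ≤ f v₁ := norm_nonneg _
  have hb : 0 ≤ f v₂ := norm_nonneg _
  have hlow : (f v₁ ^ n) ^ 2 ≤ |A.det| ^ 2 := by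
    calc (f v₁ ^ n) ^ 2 = ∏ _i : Fin n, f v₁ ^ 2 := by
          rw [Finset.prod_const]; simp [← pow_mul, mul_comm]
      _ ≤ ∏ i, hS.eigenvalues i := Finset.prod_le_prod (fun i _ => by positivity)
          (fun i _ => (key i).1)
      _ = A.det ^ 2 := hdet2.symm
      _ = |A.det| ^ 2 := (sq_abs _).symm
  have hhigh : |A.det| ^ 2 ≤ (f v₂ ^ n) ^ 2 := by
    calc |A.det| ^ 2 = A.det ^ 2 := sq_abs _
      _ = ∏ i, hS.eigenvalues i := hdet2
      _ ≤ ∏ _i : Fin n, f v₂ ^ 2 := Finset.prod_le_prod (fun i _ => by rw [eig_eq_sq_norm n A hS i]; positivity)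
          (fun i _ => (key i).2)
      _ = (f v₂ ^ n) ^ 2 := by rw [Finset.prod_const]; simp [← pow_mul, mul_comm]
  have hlow' : f v₁ ^ n ≤ |A.det| :=
    (pow_le_pow_iff_left₀ (by positivity) (abs_nonneg _) two_ne_zero).mp hlow
  have hhigh' : |A.det| ≤ f v₂ ^ n :=
    (pow_le_pow_iff_left₀ (abs_nonneg _) (by positivity) two_ne_zero).mp hhigh
  have hda : f v₁ ≤ d := by
    calc f v₁ = (f v₁ ^ n) ^ ((n:ℝ)⁻¹) := (Real.pow_rpow_inv_natCast ha hn.ne').symm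
      _ ≤ d := Real.rpow_le_rpow (pow_nonneg ha n) hlow' (by positivity)
  have hdb : d ≤ f v₂ := by
    calc d ≤ (f v₂ ^ n) ^ ((n:ℝ)⁻¹) := Real.rpow_le_rpow (abs_nonneg _) hhigh' (by positivity)
      _ = f v₂ := Real.pow_rpow_inv_natCast hb hn.ne'
  rcases eq_or_lt_of_le (Nat.succ_le_of_lt hn) with h1 | h1
  · -- n = 1
    have hn1 : n = 1 := h1.symm
    subst hn1
    refine ⟨EuclideanSpace.single 0 1, by simp [EuclideanSpace.norm_single], ?_⟩
    have he : (Matrix.toEuclideanLin A) (EuclideanSpace.single (0 : Fin 1) 1)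
        = EuclideanSpace.single (0 : Fin 1) (A 0 0) := by
      ext i
      simp [Matrix.toEuclideanLin_apply, Matrix.mulVec, dotProduct, EuclideanSpace.single_apply, Fin.eq_zero i]
    rw [he, EuclideanSpace.norm_single, hd]
    simp [Matrix.det_fin_one, Real.norm_eq_abs]
  · -- 1 < n : sphere connected, IVT
    have hrank : 1 < Module.rank ℝ (EuclideanSpace ℝ (Fin n)) := by
      rw [← Module.finrank_eq_rank]
      rw [finrank_euclideanSpace_fin]
      exact_mod_cast h1
    have hconn := isPreconnected_sphere hrank (0 : EuclideanSpace ℝ (Fin n)) 1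
    have := hconn.intermediate_value hv₁S hv₂S hfc.continuousOn
    have hdI : d ∈ Set.Icc (f v₁) (f v₂) := ⟨hda, hdb⟩
    obtain ⟨v, hvS, hvf⟩ := this hdI
    exact ⟨v, by simpa using mem_sphere_zero_iff_norm.mp hvS, hvf⟩

lemma ortho_cols (n : ℕ) (b : OrthonormalBasis (Fin n) ℝ (EuclideanSpace ℝ (Fin n))) :
    (Matrix.of fun i j => b j i)ᵀ * (Matrix.of fun i j => b j i) = 1 := by
  ext i j
  have h := orthonormal_iff_ite.mp b.orthonormal i j
  simp only [PiLp.inner_apply, RCLike.inner_apply, starRingEnd_apply, star_trivial] at h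
  simp only [Matrix.mul_apply, Matrix.transpose_apply, Matrix.of_apply, Matrix.one_apply]
  rw [← h]; exact Finset.sum_congr rfl (fun _ _ => mul_comm _ _)

lemma deflate (n : ℕ) (A : Matrix (Fin (n+1)) (Fin (n+1)) ℝ) (hA : A.det ≠ 0) :
    ∃ P Q : Matrix (Fin (n+1)) (Fin (n+1)) ℝ, Pᵀ * P = 1 ∧ Qᵀ * Q = 1 ∧
      ∀ i, (Pᵀ * A * Q) i 0 = if i = 0 then |A.det| ^ (((n+1 : ℕ)) : ℝ)⁻¹ else 0 := by
  set d : ℝ := |A.det| ^ (((n+1 : ℕ)) : ℝ)⁻¹ with hd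
  have hd0 : 0 < d := Real.rpow_pos_of_pos (abs_pos.mpr hA) _
  obtain ⟨v, hv1, hvd⟩ := exists_unit_norm_mulVec (n+1) (Nat.succ_pos n) A hA
  set u : EuclideanSpace ℝ (Fin (n+1)) := d⁻¹ • (Matrix.toEuclideanLin A) v with hu
  have hu1 : ‖u‖ = 1 := by
    rw [hu, norm_smul, hvd, norm_inv, Real.norm_eq_abs, abs_of_pos hd0]
    exact inv_mul_cancel₀ hd0.ne'
  have hAv : (Matrix.toEuclideanLin A) v = d • u := by
    rw [hu, smul_inv_smul₀ hd0.ne']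
  have hcard : Module.finrank ℝ (EuclideanSpace ℝ (Fin (n+1))) = Fintype.card (Fin (n+1)) := by
    simp
  have horth : ∀ w : EuclideanSpace ℝ (Fin (n+1)), ‖w‖ = 1 →
      Orthonormal ℝ (Set.restrict {(0 : Fin (n+1))} (fun _ => w)) := by
    intro w hw
    constructor
    · intro i; exact hw
    · intro i j hij
      exact absurd (Subtype.ext (by
        have hi := i.2; have hj := j.2
        simp only [Set.mem_singleton_iff] at hi hj
        rw [hi, hj])) hij
  obtain ⟨bQ, hbQ⟩ := (horth v hv1).exists_orthonormalBasis_extension_of_card_eq hcard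
  obtain ⟨bP, hbP⟩ := (horth u hu1).exists_orthonormalBasis_extension_of_card_eq hcard
  have hbQ0 : bQ 0 = v := hbQ 0 rfl
  have hbP0 : bP 0 = u := hbP 0 rfl
  refine ⟨Matrix.of fun i j => bP j i, Matrix.of fun i j => bQ j i,
    ortho_cols _ bP, ortho_cols _ bQ, ?_⟩
  intro i
  have hAQ : ∀ k, ((Matrix.of fun i j => bP j i)ᵀ * A * (Matrix.of fun i j => bQ j i)) k 0
      = ∑ l, bP k l * (d * bP 0 l) := by
    intro k
    rw [Matrix.mul_assoc, Matrix.mul_apply]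
    congr 1
    funext l
    rw [Matrix.mul_apply]
    have hcol : ∑ j, A l j * (Matrix.of fun i j => bQ j i) j 0 = (d • u) l := by
      rw [← hAv]
      simp only [Matrix.of_apply, hbQ0]
      rfl
    rw [hcol]
    simp only [Matrix.transpose_apply, Matrix.of_apply, PiLp.smul_apply, smul_eq_mul, hbP0]
  rw [hAQ i]
  have hinner := orthonormal_iff_ite.mp bP.orthonormal i 0
  simp only [PiLp.inner_apply, RCLike.inner_apply, starRingEnd_apply, star_trivial] at hinner
  calc ∑ l, bP i l * (d * bP 0 l) = d * ∑ l, bP i l * bP 0 l := by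
        rw [Finset.mul_sum]; congr 1; funext l; ring
    _ = if i = 0 then d else 0 := by rw [Finset.sum_congr rfl (fun l _ => mul_comm (bP i l) (bP 0 l)), hinner, mul_ite, mul_one, mul_zero]

def finOneSumEquiv (n : ℕ) : Fin 1 ⊕ Fin n ≃ Fin (n+1) where
  toFun := Sum.elim (fun _ => 0) Fin.succ
  invFun := Fin.cases (Sum.inl 0) Sum.inr
  left_inv := by
    rintro (i | j)
    · simp [Subsingleton.elim i 0]
    · simp
  right_inv := by
    intro i
    induction i using Fin.cases <;> simp

@[simp] lemma finOneSumEquiv_symm_zero (n : ℕ) : (finOneSumEquiv n).symm 0 = Sum.inl 0 := rfl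

@[simp] lemma finOneSumEquiv_symm_succ (n : ℕ) (j : Fin n) :
    (finOneSumEquiv n).symm j.succ = Sum.inr j := by
  simp [finOneSumEquiv]

lemma smul_one_fin_one (d : ℝ) (i j : Fin 1) : (d • (1 : Matrix (Fin 1) (Fin 1) ℝ)) i j = d := by
  rw [Subsingleton.elim i j]
  simp [Matrix.one_apply]

lemma abs_det_eq_one_of_orthogonal {n : ℕ} {P : Matrix (Fin n) (Fin n) ℝ}
    (hP : Pᵀ * P = 1) : |P.det| = 1 := by
  have h := congrArg Matrix.det hP
  rw [Matrix.det_mul, Matrix.det_transpose, Matrix.det_one] at h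
  have : |P.det| * |P.det| = 1 := by rw [← abs_mul, h, abs_one]
  rcases mul_self_eq_one_iff.mp this with h1 | h1
  · exact h1
  · nlinarith [abs_nonneg P.det]

lemma gmd_aux : ∀ (N : ℕ) (A : Matrix (Fin N) (Fin N) ℝ), A.det ≠ 0 →
    ∃ U V R : Matrix (Fin N) (Fin N) ℝ,
      Uᵀ * U = 1 ∧ Vᵀ * V = 1 ∧
      (∀ i j : Fin N, j < i → R i j = 0) ∧
      (∀ i : Fin N, R i i = |A.det| ^ ((N : ℝ))⁻¹) ∧
      A = U * R * Vᵀ := by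
  intro N
  induction N with
  | zero =>
    intro A _
    refine ⟨1, 1, 1, by simp, by simp, fun i => i.elim0, fun i => i.elim0, ?_⟩
    ext i j
    exact i.elim0
  | succ N ih =>
    intro A hA
    set d : ℝ := |A.det| ^ (((N+1 : ℕ)) : ℝ)⁻¹ with hd
    have hd0 : 0 < d := Real.rpow_pos_of_pos (abs_pos.mpr hA) _
    obtain ⟨P, Q, hP, hQ, hcol⟩ := deflate N A hA
    have hPP : P * Pᵀ = 1 := mul_eq_one_comm.mp hP
    have hQQ : Q * Qᵀ = 1 := mul_eq_one_comm.mp hQ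
    set M : Matrix (Fin (N+1)) (Fin (N+1)) ℝ := Pᵀ * A * Q with hM
    set B : Matrix (Fin N) (Fin N) ℝ := M.submatrix Fin.succ Fin.succ with hB
    -- determinant bookkeeping
    have hdetM : |M.det| = |A.det| := by
      rw [hM, Matrix.det_mul, Matrix.det_mul, abs_mul, abs_mul, Matrix.det_transpose,
        abs_det_eq_one_of_orthogonal hP, abs_det_eq_one_of_orthogonal hQ]
      ring
    have hdetMB : M.det = d * B.det := by
      rw [Matrix.det_succ_column_zero]
      rw [Finset.sum_eq_single 0]
      · rw [hcol 0, if_pos rfl, Fin.succAbove_zero,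
          show ((0 : Fin (N+1)) : ℕ) = 0 from rfl, pow_zero, one_mul, ← hd, ← hB]
      · intro i _ hi
        rw [hcol i, if_neg hi]
        ring
      · intro h
        exact absurd (Finset.mem_univ 0) h
    have hdpow : d ^ (N+1) = |A.det| := by
      rw [hd]
      exact Real.rpow_inv_natCast_pow (abs_nonneg _) (Nat.succ_ne_zero N)
    have hdetB : |B.det| = d ^ N := by
      have h1 : d * |B.det| = d ^ (N+1) := by
        rw [hdpow, ← hdetM, hdetMB, abs_mul, abs_of_pos hd0]
      rw [pow_succ' d N] at h1
      exact mul_left_cancel₀ hd0.ne' h1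
    have hBdet : B.det ≠ 0 := by
      intro h
      rw [h, abs_zero] at hdetB
      exact (pow_pos hd0 N).ne' hdetB.symm
    obtain ⟨U₁, V₁, R₁, hU₁, hV₁, hR₁tri, hR₁diag, hB₁⟩ := ih B hBdet
    have hV₁V₁ : V₁ * V₁ᵀ = 1 := mul_eq_one_comm.mp hV₁
    have hR₁d : ∀ i : Fin N, R₁ i i = d := by
      intro i
      rw [hR₁diag i, hdetB, Real.pow_rpow_inv_natCast hd0.le (Fin.pos i).ne']
    -- block assembly
    set W : Matrix (Fin 1) (Fin N) ℝ := Matrix.of fun _ j => M 0 j.succ with hW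
    have hMblocks : M = (Matrix.reindex (finOneSumEquiv N) (finOneSumEquiv N))
        (Matrix.fromBlocks (d • (1 : Matrix (Fin 1) (Fin 1) ℝ)) W 0 B) := by
      ext i j
      rw [Matrix.reindex_apply, Matrix.submatrix_apply]
      induction i using Fin.cases with
      | zero =>
        induction j using Fin.cases with
        | zero =>
          simp only [finOneSumEquiv_symm_zero, Matrix.fromBlocks_apply₁₁]
          rw [smul_one_fin_one, hcol 0, if_pos rfl]
        | succ j =>
          simp only [finOneSumEquiv_symm_zero, finOneSumEquiv_symm_succ,
            Matrix.fromBlocks_apply₁₂, Matrix.of_apply]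
          rfl
      | succ i =>
        induction j using Fin.cases with
        | zero =>
          simp only [finOneSumEquiv_symm_zero, finOneSumEquiv_symm_succ,
            Matrix.fromBlocks_apply₂₁, Matrix.zero_apply]
          rw [hcol i.succ, if_neg (Fin.succ_ne_zero i)]
        | succ j =>
          simp only [finOneSumEquiv_symm_succ, Matrix.fromBlocks_apply₂₂, hB,
            Matrix.submatrix_apply]
    set EU : Matrix (Fin (N+1)) (Fin (N+1)) ℝ :=
      (Matrix.reindex (finOneSumEquiv N) (finOneSumEquiv N)) (Matrix.fromBlocks 1 0 0 U₁) with hEU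
    set EV : Matrix (Fin (N+1)) (Fin (N+1)) ℝ :=
      (Matrix.reindex (finOneSumEquiv N) (finOneSumEquiv N)) (Matrix.fromBlocks 1 0 0 V₁) with hEV
    set R : Matrix (Fin (N+1)) (Fin (N+1)) ℝ :=
      (Matrix.reindex (finOneSumEquiv N) (finOneSumEquiv N))
        (Matrix.fromBlocks (d • (1 : Matrix (Fin 1) (Fin 1) ℝ)) (W * V₁) 0 R₁) with hR
    have hWV : W * V₁ * V₁ᵀ = W := by rw [Matrix.mul_assoc, hV₁V₁, Matrix.mul_one]
    have hEUO : EUᵀ * EU = 1 := by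
      rw [hEU, Matrix.reindex_apply, Matrix.transpose_submatrix, Matrix.submatrix_mul_equiv,
        Matrix.fromBlocks_transpose]
      simp only [Matrix.transpose_one, Matrix.transpose_zero, Matrix.fromBlocks_multiply,
        Matrix.one_mul, Matrix.mul_one, Matrix.mul_zero, Matrix.zero_mul, hU₁,
        add_zero, zero_add, Matrix.fromBlocks_one]
      exact Matrix.submatrix_one_equiv _
    have hEVO : EVᵀ * EV = 1 := by
      rw [hEV, Matrix.reindex_apply, Matrix.transpose_submatrix, Matrix.submatrix_mul_equiv,
        Matrix.fromBlocks_transpose]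
      simp only [Matrix.transpose_one, Matrix.transpose_zero, Matrix.fromBlocks_multiply,
        Matrix.one_mul, Matrix.mul_one, Matrix.mul_zero, Matrix.zero_mul, hV₁,
        add_zero, zero_add, Matrix.fromBlocks_one]
      exact Matrix.submatrix_one_equiv _
    have hMfact : EU * R * EVᵀ = M := by
      rw [hEU, hEV, hR, Matrix.reindex_apply, Matrix.reindex_apply, Matrix.reindex_apply,
        Matrix.transpose_submatrix, Matrix.submatrix_mul_equiv, Matrix.submatrix_mul_equiv,
        Matrix.fromBlocks_transpose, Matrix.fromBlocks_multiply, Matrix.fromBlocks_multiply]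
      rw [hMblocks, Matrix.reindex_apply]
      congr 1
      simp only [Matrix.transpose_one, Matrix.transpose_zero, Matrix.one_mul, Matrix.mul_one,
        Matrix.mul_zero, Matrix.zero_mul, add_zero, zero_add, ← Matrix.mul_assoc]
      rw [hWV, ← hB₁]
    refine ⟨P * EU, Q * EV, R, ?_, ?_, ?_, ?_, ?_⟩
    · rw [Matrix.transpose_mul, Matrix.mul_assoc, ← Matrix.mul_assoc Pᵀ P EU, hP,
        Matrix.one_mul, hEUO]
    · rw [Matrix.transpose_mul, Matrix.mul_assoc, ← Matrix.mul_assoc Qᵀ Q EV, hQ,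
        Matrix.one_mul, hEVO]
    · intro i j hji
      rw [hR, Matrix.reindex_apply, Matrix.submatrix_apply]
      induction i using Fin.cases with
      | zero => exact absurd hji (Fin.not_lt_zero j)
      | succ i =>
        induction j using Fin.cases with
        | zero =>
          simp only [finOneSumEquiv_symm_zero, finOneSumEquiv_symm_succ,
            Matrix.fromBlocks_apply₂₁, Matrix.zero_apply]
        | succ j =>
          simp only [finOneSumEquiv_symm_succ, Matrix.fromBlocks_apply₂₂]
          exact hR₁tri i j (by simpa [Fin.succ_lt_succ_iff] using hji)
    · intro i
      rw [hR, Matrix.reindex_apply, Matrix.submatrix_apply]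
      induction i using Fin.cases with
      | zero =>
        simp only [finOneSumEquiv_symm_zero, Matrix.fromBlocks_apply₁₁]
        rw [smul_one_fin_one]
      | succ i =>
        simp only [finOneSumEquiv_symm_succ, Matrix.fromBlocks_apply₂₂]
        exact hR₁d i
    · have h1 : P * M = A * Q := by
        rw [hM, ← Matrix.mul_assoc, ← Matrix.mul_assoc, hPP, Matrix.one_mul]
      have h2 : P * M * Qᵀ = A := by
        rw [h1, Matrix.mul_assoc, hQQ, Matrix.mul_one]
      have h3 : P * (EU * R * EVᵀ) * Qᵀ = P * EU * R * (Q * EV)ᵀ := by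
        rw [Matrix.transpose_mul]
        simp only [Matrix.mul_assoc]
      rw [← h3, hMfact, h2]

/-- geometric mean decomposition. Every invertible real `N×N`
matrix `A` can be written `A = U R Vᵀ` with `U, V` orthogonal and `R` upper
triangular with all diagonal entries equal to `|det A|^{1/N}`. -/
theorem geometric_mean_decomposition (N : ℕ) (hN : 0 < N)
    (A : Matrix (Fin N) (Fin N) ℝ) (hA : IsUnit A.det) :
    ∃ U V R : Matrix (Fin N) (Fin N) ℝ,
      Uᵀ * U = 1 ∧ Vᵀ * V = 1 ∧
      (∀ i j : Fin N, j < i → R i j = 0) ∧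
      (∀ i : Fin N, R i i = |A.det| ^ ((1 : ℝ) / N)) ∧
      A = U * R * Vᵀ := by
  obtain ⟨U, V, R, h1, h2, h3, h4, h5⟩ := gmd_aux N A (isUnit_iff_ne_zero.mp hA)
  refine ⟨U, V, R, h1, h2, h3, fun i => ?_, h5⟩
  rw [one_div]
  exact h4 i
end

section
/- Trace bound for the optimal Gram matrix: let S be a real N×N diagonal matrix with diagonal entries s₁ ≥ … ≥ s_N > 0, and define h(G) := inf over orthogonal N×N matrices U of tr(S⁻² U G Uᵀ). If G ∈ R₁ (i.e., G is real symmetric with eᵀGe ≥ 1 for all nonzero e ∈ ℤ^N) satisfies h(G) ≤ h(G') for every G' ∈ R₁, then tr(G) ≤ N · (s₁ / (det S)^{1/N})². -/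
open Matrix BigOperators

/-- The Ryshkov polytope `R₁`. -/
def RyshkovOne (N : ℕ) : Set (Matrix (Fin N) (Fin N) ℝ) :=
  {G | G.IsSymm ∧ ∀ e : Fin N → ℤ, e ≠ 0 → 1 ≤ intQuadForm G e}

/-- The infimum over orthogonal matrices `U` of `tr(S⁻² U G Uᵀ)`, where
`S⁻² = diag(1/s_j²)`. -/
noncomputable def orthInf {N : ℕ} (s : Fin N → ℝ)
    (G : Matrix (Fin N) (Fin N) ℝ) : ℝ :=
  sInf ((fun U : Matrix (Fin N) (Fin N) ℝ =>
      (Matrix.diagonal (fun j => 1 / (s j) ^ 2) * U * G * Uᵀ).trace) ''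
    {U | Uᵀ * U = 1})

namespace OGTB

variable {k : ℕ}

def blk (x : ℝ) (r c : Fin k → ℝ) (M : Matrix (Fin k) (Fin k) ℝ) :
    Matrix (Fin (k+1)) (Fin (k+1)) ℝ :=
  Matrix.of (Fin.cons (Fin.cons x r) (fun i => Fin.cons (c i) (M i)))

variable {x x' y z : ℝ} {r c r' c' v w : Fin k → ℝ} {M M' : Matrix (Fin k) (Fin k) ℝ}

@[simp] lemma blk_00 : blk x r c M 0 0 = x := rfl
@[simp] lemma blk_0s (j : Fin k) : blk x r c M 0 j.succ = r j := rfl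
@[simp] lemma blk_s0 (i : Fin k) : blk x r c M i.succ 0 = c i := rfl
@[simp] lemma blk_ss (i j : Fin k) : blk x r c M i.succ j.succ = M i j := rfl

@[simp] lemma fcons_add (x y : ℝ) (v w : Fin k → ℝ) :
    (Fin.cons x v + Fin.cons y w : Fin (k+1) → ℝ) = Fin.cons (x+y) (v+w) := by
  funext i; refine Fin.cases ?_ (fun i' => ?_) i <;> simp

@[simp] lemma fcons_smul (a x : ℝ) (v : Fin k → ℝ) :
    a • (Fin.cons x v : Fin (k+1) → ℝ) = Fin.cons (a*x) (a • v) := by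
  funext i; refine Fin.cases ?_ (fun i' => ?_) i <;> simp

@[simp] lemma fcons_zero : (Fin.cons 0 0 : Fin (k+1) → ℝ) = 0 := by
  funext i; refine Fin.cases ?_ (fun i' => ?_) i <;> simp

@[simp] lemma fcons_dot (x y : ℝ) (v w : Fin k → ℝ) :
    (Fin.cons x v : Fin (k+1) → ℝ) ⬝ᵥ Fin.cons y w = x*y + v ⬝ᵥ w := by
  simp [dotProduct, Fin.sum_univ_succ]

lemma blk_transpose : (blk x r c M)ᵀ = blk x c r Mᵀ := by
  ext i j
  refine Fin.cases ?_ (fun i' => ?_) i <;> refine Fin.cases ?_ (fun j' => ?_) j <;> simp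

lemma blk_add : blk x r c M + blk x' r' c' M' = blk (x+x') (r+r') (c+c') (M+M') := by
  ext i j
  refine Fin.cases ?_ (fun i' => ?_) i <;> refine Fin.cases ?_ (fun j' => ?_) j <;> simp

lemma blk_mul : blk x r c M * blk x' r' c' M' =
    blk (x*x' + r ⬝ᵥ c') (x • r' + vecMul r M') (x' • c + M.mulVec c')
        (vecMulVec c r' + M * M') := by
  ext i j
  refine Fin.cases ?_ (fun i' => ?_) i <;> refine Fin.cases ?_ (fun j' => ?_) j <;>
    simp [Matrix.mul_apply, Fin.sum_univ_succ, dotProduct, Matrix.mulVec,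
      Matrix.vecMul, Matrix.vecMulVec_apply, mul_comm]

lemma blk_mulVec : (blk x r c M).mulVec (Fin.cons y w) =
    Fin.cons (x*y + r ⬝ᵥ w) (y • c + M.mulVec w) := by
  ext i
  refine Fin.cases ?_ (fun i' => ?_) i <;>
    simp [Matrix.mulVec, dotProduct, Fin.sum_univ_succ, mul_comm]

lemma blk_vecMul : vecMul (Fin.cons y w) (blk x r c M) =
    Fin.cons (y*x + w ⬝ᵥ c) (y • r + vecMul w M) := by
  ext j
  refine Fin.cases ?_ (fun j' => ?_) j <;>
    simp [Matrix.vecMul, dotProduct, Fin.sum_univ_succ, mul_comm]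

lemma vecMulVec_cons : vecMulVec (Fin.cons y v) (Fin.cons z w) =
    blk (y*z) (y • w) (z • v) (vecMulVec v w) := by
  ext i j
  refine Fin.cases ?_ (fun i' => ?_) i <;> refine Fin.cases ?_ (fun j' => ?_) j <;>
    simp [Matrix.vecMulVec_apply, mul_comm]

@[simp] lemma vecMulVec_zero_left : vecMulVec (0 : Fin k → ℝ) w = 0 := by
  ext i j; simp [Matrix.vecMulVec_apply]

@[simp] lemma vecMulVec_zero_right : vecMulVec v (0 : Fin k → ℝ) = 0 := by
  ext i j; simp [Matrix.vecMulVec_apply]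

lemma one_blk : (1 : Matrix (Fin (k+1)) (Fin (k+1)) ℝ) = blk 1 0 0 1 := by
  ext i j
  refine Fin.cases ?_ (fun i' => ?_) i <;> refine Fin.cases ?_ (fun j' => ?_) j <;>
    simp [Matrix.one_apply, Fin.succ_ne_zero, (Fin.succ_ne_zero _).symm, Fin.succ_inj]

lemma diagonal_blk {d : ℝ} {dv : Fin k → ℝ} :
    Matrix.diagonal (Fin.cons d dv) = blk d 0 0 (Matrix.diagonal dv) := by
  ext i j
  refine Fin.cases ?_ (fun i' => ?_) i <;> refine Fin.cases ?_ (fun j' => ?_) j <;>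
    simp [Matrix.diagonal_apply, Fin.succ_ne_zero, (Fin.succ_ne_zero _).symm, Fin.succ_inj]

lemma blk_congr {d : ℝ} {dr dc : Fin k → ℝ} {D : Matrix (Fin k) (Fin k) ℝ}
    (h1 : x = d) (h2 : r = dr) (h3 : c = dc) (h4 : M = D) :
    blk x r c M = blk d dr dc D := by rw [h1, h2, h3, h4]

lemma conj_vecMulVec {m : ℕ} (A Z : Matrix (Fin m) (Fin m) ℝ) (x y : Fin m → ℝ) :
    A * vecMulVec x y * Z = vecMulVec (A.mulVec x) (vecMul y Z) := by
  ext i j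
  simp only [Matrix.mul_apply, Matrix.vecMulVec_apply, Matrix.mulVec, Matrix.vecMul,
    dotProduct, Finset.sum_mul, Finset.mul_sum]
  exact Finset.sum_congr rfl fun q _ => Finset.sum_congr rfl fun p _ => by ring

lemma one_le_sq_int (m : ℤ) (hm : m ≠ 0) : (1:ℝ) ≤ ((m:ℝ))^2 := by
  have h1 : (1:ℤ) ≤ m^2 := by
    have h2 := Int.one_le_abs (by simpa using hm)
    calc (1:ℤ) = 1*1 := by ring
    _ ≤ |m| * |m| := mul_le_mul h2 h2 (by norm_num) (abs_nonneg _)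
    _ = m^2 := by rw [← abs_mul, abs_mul_self]; ring
  exact_mod_cast h1

def HornProp (n : ℕ) (t : Fin n → ℝ) : Prop :=
  ∃ B U : Matrix (Fin n) (Fin n) ℝ,
    (∀ e : Fin n → ℤ, e ≠ 0 →
        1 ≤ ∑ i, (B.mulVec (fun j => (e j : ℝ)) i)^2) ∧
    Uᵀ * U = 1 ∧ U * (Bᵀ * B) * Uᵀ = Matrix.diagonal (fun j => (t j)^2)

lemma horn_step (u : Fin (k+2) → ℝ) (hu : ∀ j, 0 < u j)
    (hp : ∏ j, u j = 1) (ha : 1 < u 0) (hb : u 1 < 1)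
    (IH : ∀ t : Fin (k+1) → ℝ, (∀ j, 0 < t j) → ∏ j, t j = 1 → HornProp (k+1) t) :
    HornProp (k+2) u := by
  obtain ⟨a, ha_def⟩ : ∃ x, x = u 0 := ⟨_, rfl⟩
  obtain ⟨b, hb_def⟩ : ∃ x, x = u 1 := ⟨_, rfl⟩
  rw [← ha_def] at ha
  rw [← hb_def] at hb
  have hapos : 0 < a := by rw [ha_def]; exact hu 0
  have hbpos : 0 < b := by rw [hb_def]; exact hu 1
  obtain ⟨t', ht'_def⟩ : ∃ f : Fin (k+1) → ℝ,
      f = Fin.cons (a*b) (fun j => u j.succ.succ) := ⟨_, rfl⟩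
  have ht'pos : ∀ j, 0 < t' j := by
    intro j
    rw [ht'_def]
    refine Fin.cases ?_ (fun j' => ?_) j
    · simp [mul_pos hapos hbpos]
    · simp [hu]
  have ht'prod : ∏ j, t' j = 1 := by
    have h2 : ∏ j, u j = u 0 * (u 1 * ∏ j : Fin k, u j.succ.succ) := by
      rw [Fin.prod_univ_succ, Fin.prod_univ_succ, Fin.succ_zero_eq_one]
    rw [h2] at hp
    rw [ht'_def, Fin.prod_univ_succ]
    simp only [Fin.cons_zero, Fin.cons_succ]
    rw [ha_def, hb_def]
    linear_combination hp
  obtain ⟨C, W, hC, hWo, hWd⟩ := IH t' ht'pos ht'prod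
  have hWWT : W * Wᵀ = 1 := mul_eq_one_comm.mp hWo
  -- scalars
  have ha1 : 0 < a^2 - 1 := by nlinarith [mul_pos (sub_pos.mpr ha) (show (0:ℝ) < a + 1 by linarith)]
  have hb1 : 0 < 1 - b^2 := by nlinarith [mul_pos (sub_pos.mpr hb) (show (0:ℝ) < 1 + b by linarith)]
  obtain ⟨bet, hbet_def⟩ : ∃ x : ℝ, x = Real.sqrt ((a^2 - 1) * (1 - b^2)) := ⟨_, rfl⟩
  have hbetsq : bet^2 = (a^2-1)*(1-b^2) := by
    rw [hbet_def]; exact Real.sq_sqrt (le_of_lt (mul_pos ha1 hb1))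
  obtain ⟨rho, hrho_def⟩ : ∃ x : ℝ, x = Real.sqrt (bet^2 + (a^2-1)^2) := ⟨_, rfl⟩
  have hrhopos : 0 < rho := by
    rw [hrho_def]
    exact Real.sqrt_pos.mpr (add_pos_of_nonneg_of_pos (sq_nonneg bet) (pow_pos ha1 2))
  have hrhosq : rho^2 = bet^2 + (a^2-1)^2 := by
    rw [hrho_def]; exact Real.sq_sqrt (by positivity)
  have hrhone : rho ≠ 0 := ne_of_gt hrhopos
  obtain ⟨c0, hc0_def⟩ : ∃ x : ℝ, x = bet / rho := ⟨_, rfl⟩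
  obtain ⟨s0, hs0_def⟩ : ∃ x : ℝ, x = (a^2-1) / rho := ⟨_, rfl⟩
  have hc0m : c0 * rho = bet := by rw [hc0_def]; field_simp
  have hs0m : s0 * rho = a^2 - 1 := by rw [hs0_def]; field_simp
  have hrho2ne : rho^2 ≠ 0 := pow_ne_zero 2 hrhone
  have hcs : c0^2 + s0^2 = 1 := by
    have h : (c0^2 + s0^2)*rho^2 = 1*rho^2 := by
      linear_combination (c0*rho + bet)*hc0m + (s0*rho + (a^2-1))*hs0m - hrhosq
    exact mul_right_cancel₀ hrho2ne h
  obtain ⟨s₂, hs₂_def⟩ : ∃ x : ℝ, x = bet^2 + (a*b)^2 := ⟨_, rfl⟩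
  have hs₂ : s₂ = a^2 + b^2 - 1 := by rw [hs₂_def, hbetsq]; ring
  have I1 : c0*1 + s0*bet = a^2*c0 := by
    have h : (c0*1 + s0*bet)*rho = (a^2*c0)*rho := by
      linear_combination hc0m + bet*hs0m - a^2*hc0m
    exact mul_right_cancel₀ hrhone h
  have I2 : c0*bet + s0*s₂ = a^2*s0 := by
    have key : bet^2 + (a^2-1)*s₂ = a^2*(a^2-1) := by rw [hs₂, hbetsq]; ring
    have h : (c0*bet + s0*s₂)*rho = (a^2*s0)*rho := by
      linear_combination bet*hc0m + s₂*hs0m - a^2*hs0m + key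
    exact mul_right_cancel₀ hrhone h
  have I3 : -s0 + c0*bet = -(b^2*s0) := by
    have key : bet^2 - (a^2-1) = -(b^2*(a^2-1)) := by rw [hbetsq]; ring
    have h : (-s0 + c0*bet)*rho = (-(b^2*s0))*rho := by
      linear_combination -hs0m + bet*hc0m + b^2*hs0m + key
    exact mul_right_cancel₀ hrhone h
  have I4 : -(s0*bet) + c0*s₂ = b^2*c0 := by
    have key : bet*s₂ - (a^2-1)*bet = b^2*bet := by rw [hs₂]; ring
    have h : (-(s0*bet) + c0*s₂)*rho = (b^2*c0)*rho := by
      linear_combination -bet*hs0m + s₂*hc0m - b^2*hc0m + key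
    exact mul_right_cancel₀ hrhone h
  -- vectors and matrices
  obtain ⟨v, hv_def⟩ : ∃ f : Fin (k+1) → ℝ, f = fun i => bet * W 0 i := ⟨_, rfl⟩
  obtain ⟨B, hB_def⟩ : ∃ M, M = blk 1 v 0 C := ⟨_, rfl⟩
  obtain ⟨Utl, hUtl_def⟩ : ∃ M, M = blk 1 0 0 W := ⟨_, rfl⟩
  have hWv : W.mulVec v = (Fin.cons bet 0 : Fin (k+1) → ℝ) := by
    funext j
    have h1 : W.mulVec v j = bet * (W * Wᵀ) j 0 := by
      rw [hv_def]
      simp only [Matrix.mulVec, dotProduct, Matrix.mul_apply, Matrix.transpose_apply,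
        Finset.mul_sum]
      exact Finset.sum_congr rfl fun i _ => by ring
    rw [h1, hWWT]
    refine Fin.cases ?_ (fun j' => ?_) j <;>
      simp [Matrix.one_apply, Fin.succ_ne_zero]
  have hvW : vecMul v Wᵀ = (Fin.cons bet 0 : Fin (k+1) → ℝ) := by
    funext j
    have h1 : vecMul v Wᵀ j = bet * (W * Wᵀ) j 0 := by
      rw [hv_def]
      simp only [Matrix.vecMul, dotProduct, Matrix.mul_apply, Matrix.transpose_apply,
        Finset.mul_sum]
      exact Finset.sum_congr rfl fun i _ => by ring
    rw [h1, hWWT]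
    refine Fin.cases ?_ (fun j' => ?_) j <;>
      simp [Matrix.one_apply, Fin.succ_ne_zero]
  obtain ⟨X, hX_def⟩ : ∃ M, M = vecMulVec v v + Cᵀ * C := ⟨_, rfl⟩
  have hBtB : Bᵀ * B = blk 1 v v X := by
    rw [hB_def, hX_def, blk_transpose, blk_mul]
    exact blk_congr (by simp) (by simp) (by simp) rfl
  obtain ⟨D₂, hD₂_def⟩ : ∃ M, M = Matrix.diagonal (fun j : Fin k => (u j.succ.succ)^2) :=
    ⟨_, rfl⟩
  have ht'sq : (fun j => (t' j)^2)
      = Fin.cons ((a*b)^2) (fun j : Fin k => (u j.succ.succ)^2) := by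
    funext j
    rw [ht'_def]
    refine Fin.cases ?_ (fun j' => ?_) j <;> simp
  have e3 : W * X * Wᵀ = blk s₂ 0 0 D₂ := by
    rw [hX_def, Matrix.mul_add, Matrix.add_mul, conj_vecMulVec, hWv, hvW, hWd,
      ht'sq, diagonal_blk, vecMulVec_cons, blk_add]
    refine blk_congr ?_ (by simp) (by simp) (by simp [hD₂_def])
    rw [hs₂_def]
    ring
  have hK : Utl * (Bᵀ*B) * Utlᵀ
      = blk 1 ((Fin.cons bet 0 : Fin (k+1) → ℝ)) ((Fin.cons bet 0 : Fin (k+1) → ℝ)) (blk s₂ 0 0 D₂) := by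
    have e1 : Utl * (Bᵀ * B) = blk 1 v ((Fin.cons bet 0 : Fin (k+1) → ℝ)) (W * X) := by
      rw [hBtB, hUtl_def, blk_mul]
      exact blk_congr (by simp) (by simp) (by simp [hWv]) (by simp)
    rw [e1, hUtl_def, blk_transpose, blk_mul]
    exact blk_congr (by simp) (by simp [hvW]) (by simp) (by simp [e3])
  obtain ⟨r1, hr1_def⟩ : ∃ f : Fin (k+1) → ℝ, f = (Fin.cons s0 (0 : Fin k → ℝ)) := ⟨_, rfl⟩
  obtain ⟨c1, hc1_def⟩ : ∃ f : Fin (k+1) → ℝ, f = (Fin.cons (-s0) (0 : Fin k → ℝ)) := ⟨_, rfl⟩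
  obtain ⟨M1, hM1_def⟩ : ∃ M, M = blk c0 (0 : Fin k → ℝ) 0 (1 : Matrix (Fin k) (Fin k) ℝ) :=
    ⟨_, rfl⟩
  obtain ⟨R, hR_def⟩ : ∃ M, M = blk c0 r1 c1 M1 := ⟨_, rfl⟩
  have hM1T : M1ᵀ = M1 := by rw [hM1_def, blk_transpose]; simp
  have hM1sq : M1 * M1 = blk (c0*c0) (0 : Fin k → ℝ) 0 (1 : Matrix (Fin k) (Fin k) ℝ) := by
    rw [hM1_def, blk_mul]
    exact blk_congr (by simp) (by simp) (by simp) (by simp)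
  have hRo : Rᵀ * R = 1 := by
    rw [hR_def, blk_transpose, hM1T, blk_mul, one_blk]
    refine blk_congr ?_ ?_ ?_ ?_
    · rw [hc1_def]
      simp only [fcons_dot, dotProduct_zero, mul_zero, add_zero]
      linear_combination hcs
    · rw [hr1_def, hc1_def, hM1_def, blk_vecMul]
      funext j
      refine Fin.cases ?_ (fun j' => ?_) j <;> simp <;> try ring
    · rw [hr1_def, hc1_def, hM1_def, blk_mulVec]
      funext j
      refine Fin.cases ?_ (fun j' => ?_) j <;> simp <;> try ring
    · rw [hr1_def, hM1sq, vecMulVec_cons, blk_add, one_blk]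
      refine blk_congr ?_ (by simp) (by simp) (by simp)
      linear_combination hcs
  have hRK : R * (blk 1 ((Fin.cons bet 0 : Fin (k+1) → ℝ)) ((Fin.cons bet 0 : Fin (k+1) → ℝ)) (blk s₂ 0 0 D₂))
      = blk (a^2*c0) ((Fin.cons (a^2*s0) (0 : Fin k → ℝ))) ((Fin.cons (-(b^2*s0)) (0 : Fin k → ℝ))) (blk (b^2*c0) 0 0 D₂) := by
    rw [hR_def, blk_mul]
    refine blk_congr ?_ ?_ ?_ ?_
    · rw [hr1_def]
      simp only [fcons_dot, dotProduct_zero, add_zero]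
      linear_combination I1
    · rw [hr1_def, blk_vecMul]
      funext j
      refine Fin.cases ?_ (fun j' => ?_) j
      · simp
        linear_combination I2
      · simp
    · rw [hc1_def, hM1_def, blk_mulVec]
      funext j
      refine Fin.cases ?_ (fun j' => ?_) j
      · simp
        linear_combination I3
      · simp
    · rw [hc1_def, hM1_def, vecMulVec_cons, blk_mul, blk_add]
      refine blk_congr ?_ (by simp) (by simp) (by simp)
      simp only [zero_dotProduct, add_zero, mul_zero]
      linear_combination I4
  have husq : (fun j : Fin (k+2) => (u j)^2)
      = Fin.cons (a^2) (Fin.cons (b^2) (fun j : Fin k => (u j.succ.succ)^2)) := by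
    funext j
    refine Fin.cases ?_ (fun j' => ?_) j
    · simp; rw [ha_def]
    · refine Fin.cases ?_ (fun j'' => ?_) j' <;> simp [Fin.succ_zero_eq_one]
      rw [hb_def]
  have hRKRT : R * (blk 1 ((Fin.cons bet 0 : Fin (k+1) → ℝ)) ((Fin.cons bet 0 : Fin (k+1) → ℝ)) (blk s₂ 0 0 D₂)) * Rᵀ
      = Matrix.diagonal (fun j => (u j)^2) := by
    rw [hRK, hR_def, blk_transpose, hM1T, blk_mul, husq, diagonal_blk, diagonal_blk]
    refine blk_congr ?_ ?_ ?_ ?_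
    · rw [hr1_def]
      simp only [fcons_dot, dotProduct_zero, add_zero]
      linear_combination a^2 * hcs
    · rw [hc1_def, hM1_def, blk_vecMul]
      funext j
      refine Fin.cases ?_ (fun j' => ?_) j <;> simp <;> try ring
    · rw [hr1_def, blk_mulVec]
      funext j
      refine Fin.cases ?_ (fun j' => ?_) j <;> simp <;> try ring
    · rw [hc1_def, hM1_def, vecMulVec_cons, blk_mul, blk_add]
      refine blk_congr ?_ (by simp) (by simp) (by simp [hD₂_def])
      simp only [zero_dotProduct, add_zero, mul_zero]
      linear_combination b^2 * hcs
  -- final assembly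
  refine ⟨B, R * Utl, ?_, ?_, ?_⟩
  · intro e he
    obtain ⟨xv, hxv_def⟩ : ∃ f : Fin (k+2) → ℝ, f = fun j => (e j : ℝ) := ⟨_, rfl⟩
    have hxv : xv = Fin.cons (xv 0) (Fin.tail xv) := (Fin.cons_self_tail xv).symm
    show 1 ≤ ∑ i, (B.mulVec (fun j => (e j : ℝ)) i)^2
    rw [← hxv_def]
    have hmv : B.mulVec xv = Fin.cons (1 * xv 0 + v ⬝ᵥ Fin.tail xv)
        ((xv 0) • (0 : Fin (k+1) → ℝ) + C.mulVec (Fin.tail xv)) := by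
      conv_lhs => rw [hB_def, hxv, blk_mulVec]
    have hsum : ∑ i, (B.mulVec xv i)^2
        = (xv 0 + v ⬝ᵥ Fin.tail xv)^2 + ∑ i : Fin (k+1), (C.mulVec (Fin.tail xv) i)^2 := by
      rw [hmv, Fin.sum_univ_succ]
      simp
    rw [hsum]
    by_cases htail : Fin.tail e = 0
    · have htx : Fin.tail xv = 0 := by
        funext j
        have hz : e j.succ = 0 := congrFun htail j
        show xv j.succ = 0
        rw [hxv_def]
        simp [hz]
      have he0 : e 0 ≠ 0 := by
        intro h0
        apply he
        rw [← Fin.cons_self_tail e, h0, htail]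
        funext i
        refine Fin.cases ?_ (fun i' => ?_) i <;> simp
      have h1 : (1:ℝ) ≤ (xv 0)^2 := by
        rw [hxv_def]; exact one_le_sq_int _ he0
      rw [htx]
      simp only [Matrix.mulVec_zero, dotProduct_zero, add_zero]
      have h2 : ∑ i : Fin (k+1), ((0:Fin (k+1) → ℝ) i)^2 = 0 := by simp
      rw [h2, add_zero]
      exact h1
    · have htx : Fin.tail xv = fun j => ((Fin.tail e j : ℤ) : ℝ) := by
        funext j
        show xv j.succ = _
        rw [hxv_def]
        rfl
      have h1 : (1:ℝ) ≤ ∑ i, (C.mulVec (Fin.tail xv) i)^2 := by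
        rw [htx]; exact hC (Fin.tail e) htail
      nlinarith [sq_nonneg (xv 0 + v ⬝ᵥ Fin.tail xv)]
  · rw [Matrix.transpose_mul]
    calc Utlᵀ * Rᵀ * (R * Utl) = Utlᵀ * (Rᵀ * R) * Utl := by
          simp only [Matrix.mul_assoc]
    _ = Utlᵀ * Utl := by rw [hRo]; simp [Matrix.mul_assoc]
    _ = 1 := by
        rw [hUtl_def, blk_transpose, blk_mul, one_blk]
        exact blk_congr (by simp) (by simp) (by simp) (by simp [hWo])
  · rw [Matrix.transpose_mul]
    calc R * Utl * (Bᵀ * B) * (Utlᵀ * Rᵀ) = R * (Utl * (Bᵀ * B) * Utlᵀ) * Rᵀ := by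
          simp only [Matrix.mul_assoc]
    _ = Matrix.diagonal (fun j => (u j)^2) := by rw [hK, hRKRT]

-- permutation machinery
variable {n : ℕ}

def permMat (σ : Equiv.Perm (Fin n)) : Matrix (Fin n) (Fin n) ℝ :=
  Matrix.of fun i j => if σ i = j then 1 else 0

lemma permMat_mul (σ : Equiv.Perm (Fin n)) (A : Matrix (Fin n) (Fin n) ℝ) (i j : Fin n) :
    (permMat σ * A) i j = A (σ i) j := by
  simp [permMat, Matrix.mul_apply, ite_mul]

lemma mul_permMatT (σ : Equiv.Perm (Fin n)) (A : Matrix (Fin n) (Fin n) ℝ) (i j : Fin n) :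
    (A * (permMat σ)ᵀ) i j = A i (σ j) := by
  simp [permMat, Matrix.mul_apply, mul_ite]

lemma permMatT_mul_permMat (σ : Equiv.Perm (Fin n)) :
    (permMat σ)ᵀ * permMat σ = 1 := by
  ext i j
  simp only [Matrix.mul_apply, Matrix.transpose_apply, permMat, Matrix.of_apply]
  rw [Finset.sum_eq_single (σ.symm i)]
  · by_cases h : i = j <;>
      simp [h, Equiv.apply_symm_apply, Matrix.one_apply, eq_comm,
        fun hij : ¬ i = j => hij]
  · intro b _ hb
    have : ¬ σ b = i := fun hh => hb (by simpa using congrArg σ.symm hh)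
    simp [this]
  · simp

lemma horn_perm (t : Fin n → ℝ) (σ : Equiv.Perm (Fin n))
    (h : HornProp n (t ∘ σ)) : HornProp n t := by
  obtain ⟨B, U, hB, hUo, hUd⟩ := h
  refine ⟨B, permMat σ.symm * U, hB, ?_, ?_⟩
  · calc (permMat σ.symm * U)ᵀ * (permMat σ.symm * U)
        = Uᵀ * (((permMat σ.symm)ᵀ * permMat σ.symm) * U) := by
          simp only [Matrix.transpose_mul, Matrix.mul_assoc]
    _ = 1 := by rw [permMatT_mul_permMat]; simpa using hUo
  · have h2 : permMat σ.symm * U * (Bᵀ * B) * (permMat σ.symm * U)ᵀ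
        = permMat σ.symm * (U * (Bᵀ * B) * Uᵀ) * (permMat σ.symm)ᵀ := by
      simp only [Matrix.transpose_mul, Matrix.mul_assoc]
    rw [h2, hUd]
    ext i j
    rw [Matrix.mul_assoc, permMat_mul]
    rw [mul_permMatT σ.symm (Matrix.diagonal fun j => ((t ∘ σ) j)^2) (σ.symm i) j]
    by_cases h : i = j
    · subst h; simp [Matrix.diagonal_apply]
    · have hne : ¬ σ.symm i = σ.symm j := fun hh => h (by simpa using congrArg σ hh)
      simp [Matrix.diagonal_apply, hne, h]

lemma horn_const_one (t : Fin n → ℝ) (h : ∀ j, t j = 1) : HornProp n t := by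
  refine ⟨1, 1, ?_, by simp, ?_⟩
  · intro e he
    obtain ⟨i0, hi0⟩ : ∃ i, e i ≠ 0 := by
      by_contra hc
      push_neg at hc
      exact he (funext hc)
    calc (1:ℝ) ≤ ((e i0 : ℝ))^2 := one_le_sq_int _ hi0
    _ ≤ ∑ i, (((1 : Matrix (Fin n) (Fin n) ℝ).mulVec (fun j => (e j : ℝ))) i)^2 := by
        simp only [Matrix.one_mulVec]
        exact Finset.single_le_sum (f := fun i => ((e i:ℝ))^2)
          (fun i _ => sq_nonneg _) (Finset.mem_univ i0)
  · have h2 : (fun j : Fin n => (t j)^2) = fun _ => 1 := funext fun j => by rw [h j]; norm_num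
    simp [h2, Matrix.diagonal_one]

lemma exists_gt_one (t : Fin n → ℝ) (ht : ∀ j, 0 < t j)
    (hp : ∏ j, t j = 1) (j0 : Fin n) (hj0 : t j0 ≠ 1) : ∃ i, 1 < t i := by
  by_contra hc
  push_neg at hc
  have h1 : t j0 < 1 := lt_of_le_of_ne (hc j0) hj0
  have h2 : ∏ j, t j < 1 := by
    calc ∏ j, t j = t j0 * ∏ j ∈ Finset.univ.erase j0, t j :=
        (Finset.mul_prod_erase _ _ (Finset.mem_univ _)).symm
    _ ≤ t j0 * 1 := by
        apply mul_le_mul_of_nonneg_left _ (le_of_lt (ht j0))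
        exact Finset.prod_le_one (fun i _ => (ht i).le) (fun i _ => hc i)
    _ < 1 := by rw [mul_one]; exact h1
  rw [hp] at h2
  exact lt_irrefl _ h2

lemma exists_lt_one (t : Fin n → ℝ) (ht : ∀ j, 0 < t j)
    (hp : ∏ j, t j = 1) (j0 : Fin n) (hj0 : 1 < t j0) : ∃ i, t i < 1 := by
  by_contra hc
  push_neg at hc
  have h2 : 1 < ∏ j, t j := by
    calc (1:ℝ) < t j0 * 1 := by rw [mul_one]; exact hj0
    _ ≤ t j0 * ∏ j ∈ Finset.univ.erase j0, t j := by
        apply mul_le_mul_of_nonneg_left _ (le_of_lt (ht j0))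
        have h4 : ∏ j ∈ Finset.univ.erase j0, (1:ℝ) ≤ ∏ j ∈ Finset.univ.erase j0, t j :=
          Finset.prod_le_prod (fun i _ => zero_le_one) (fun i _ => hc i)
        simpa using h4
    _ = ∏ j, t j := Finset.mul_prod_erase _ _ (Finset.mem_univ _)
  rw [hp] at h2
  exact lt_irrefl _ h2

theorem horn : ∀ (n : ℕ) (t : Fin n → ℝ), (∀ j, 0 < t j) → (∏ j, t j) = 1 →
    HornProp n t := by
  intro n
  induction n with
  | zero => exact fun t _ _ => horn_const_one t (fun j => j.elim0)
  | succ m IH =>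
    intro t ht hp
    by_cases hone : ∀ j, t j = 1
    · exact horn_const_one t hone
    push_neg at hone
    obtain ⟨j0, hj0⟩ := hone
    cases m with
    | zero =>
      exfalso
      apply hj0
      have h1 : ∏ j, t j = t 0 := Fin.prod_univ_one t
      have h2 : j0 = 0 := Fin.eq_zero j0
      rw [h2]
      rw [h1] at hp
      exact hp
    | succ k =>
      obtain ⟨i0, hi0⟩ := exists_gt_one t ht hp j0 hj0
      obtain ⟨i1, hi1⟩ := exists_lt_one t ht hp i0 hi0
      have hne : i0 ≠ i1 := fun h => by rw [h] at hi0; linarith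
      have h01 : (0 : Fin (k+2)) ≠ 1 := by simp [Fin.ext_iff]
      obtain ⟨σ1, hσ1⟩ : ∃ σ : Equiv.Perm (Fin (k+2)), σ = Equiv.swap 0 i0 := ⟨_, rfl⟩
      obtain ⟨jj, hjj_def⟩ : ∃ x, x = σ1 i1 := ⟨_, rfl⟩
      have hjj0 : jj ≠ 0 := by
        rw [hjj_def]
        intro h
        apply hne
        have h10 : σ1 i0 = 0 := by rw [hσ1]; exact Equiv.swap_apply_right 0 i0
        have := σ1.injective (h.trans h10.symm)
        exact this.symm
      obtain ⟨σ2, hσ2⟩ : ∃ σ : Equiv.Perm (Fin (k+2)), σ = Equiv.swap 1 jj := ⟨_, rfl⟩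
      obtain ⟨σ, hσ_def⟩ : ∃ σ : Equiv.Perm (Fin (k+2)), σ = σ2.trans σ1 := ⟨_, rfl⟩
      have hσ0 : σ 0 = i0 := by
        rw [hσ_def, hσ2, hσ1]
        simp only [Equiv.trans_apply]
        rw [Equiv.swap_apply_of_ne_of_ne h01 (Ne.symm hjj0)]
        exact Equiv.swap_apply_left 0 i0
      have hσ1' : σ 1 = i1 := by
        rw [hσ_def]
        simp only [Equiv.trans_apply]
        rw [hσ2, Equiv.swap_apply_left, hjj_def, hσ1, Equiv.swap_apply_self]
      apply horn_perm t σ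
      apply horn_step (t ∘ σ) (fun j => ht _) ?_ ?_ ?_ IH
      · have h5 := Equiv.prod_comp σ t
        simpa [Function.comp] using h5.trans hp
      · show 1 < t (σ 0)
        rw [hσ0]; exact hi0
      · show t (σ 1) < 1
        rw [hσ1']; exact hi1

-- continuity of the quadratic form
lemma quad_cont (N : ℕ) (G : Matrix (Fin N) (Fin N) ℝ) :
    Continuous (fun x : Fin N → ℝ => x ⬝ᵥ G.mulVec x) := by
  show Continuous fun x : Fin N → ℝ => ∑ i, x i * ∑ j, G i j * x j
  apply continuous_finset_sum
  intro i _
  exact (continuous_apply i).mul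
    (continuous_finset_sum _ fun j _ => continuous_const.mul (continuous_apply j))

lemma quad_smul (N : ℕ) (G : Matrix (Fin N) (Fin N) ℝ) (d : ℝ) (x : Fin N → ℝ) :
    (fun i => d * x i) ⬝ᵥ G.mulVec (fun i => d * x i) = d * (d * (x ⬝ᵥ G.mulVec x)) := by
  simp only [dotProduct, Matrix.mulVec, Finset.mul_sum]
  refine Finset.sum_congr rfl fun i _ => Finset.sum_congr rfl fun j _ => by ring

lemma quad_nonneg_rat (N : ℕ) (G : Matrix (Fin N) (Fin N) ℝ)
    (hmin : ∀ e : Fin N → ℤ, e ≠ 0 → 1 ≤ intQuadForm G e) (q : Fin N → ℚ) :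
    0 ≤ (fun i => (q i : ℝ)) ⬝ᵥ G.mulVec (fun i => (q i : ℝ)) := by
  by_cases hq : q = 0
  · have h0 : (fun i => ((q i : ℚ) : ℝ)) = (0 : Fin N → ℝ) := by
      funext i; rw [hq]; simp
    rw [h0]
    simp
  · obtain ⟨d, hd_def⟩ : ∃ m : ℕ, m = ∏ i, (q i).den := ⟨_, rfl⟩
    have hdpos : 0 < d := by rw [hd_def]; exact Finset.prod_pos (fun i _ => (q i).pos)
    obtain ⟨e, he_def⟩ : ∃ f : Fin N → ℤ,
        f = fun i => (q i).num * ∏ j ∈ Finset.univ.erase i, ((q j).den : ℤ) := ⟨_, rfl⟩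
    have key : ∀ i, ((e i : ℚ)) = q i * (d : ℚ) := by
      intro i
      have h1 : ((q i).num : ℚ) = q i * ((q i).den : ℚ) := by
        have hd0 : ((q i).den : ℚ) ≠ 0 := Nat.cast_ne_zero.mpr (q i).den_nz
        have h := Rat.num_div_den (q i)
        rw [div_eq_iff hd0] at h
        exact h
      have h2 : ((q i).den : ℚ) * ∏ j ∈ Finset.univ.erase i, ((q j).den : ℚ) = (d : ℚ) := by
        rw [Finset.mul_prod_erase Finset.univ (fun j => (((q j).den : ℕ) : ℚ))
          (Finset.mem_univ i), hd_def]
        push_cast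
        rfl
      calc ((e i : ℚ)) = ((q i).num : ℚ) * ∏ j ∈ Finset.univ.erase i, ((q j).den : ℚ) := by
            rw [he_def]
            push_cast
            rfl
      _ = q i * (((q i).den : ℚ) * ∏ j ∈ Finset.univ.erase i, ((q j).den : ℚ)) := by
            rw [h1]; ring
      _ = q i * (d : ℚ) := by rw [h2]
    have hennz : e ≠ 0 := by
      obtain ⟨i0, hi0⟩ : ∃ i, q i ≠ 0 := by
        by_contra hc; push_neg at hc; exact hq (funext hc)
      intro hcontra
      have h3 : e i0 = 0 := by rw [hcontra]; rfl
      rw [he_def] at h3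
      simp only at h3
      rcases mul_eq_zero.mp h3 with h4 | h4
      · exact hi0 (Rat.num_eq_zero.mp h4)
      · have h5 : ∀ j ∈ Finset.univ.erase i0, ((q j).den : ℤ) ≠ 0 :=
          fun j _ => Int.natCast_ne_zero.mpr (q j).den_nz
        exact (Finset.prod_ne_zero_iff.mpr h5) h4
    have hscale : (fun i => ((e i : ℤ) : ℝ)) = fun i => (d : ℝ) * ((q i : ℚ) : ℝ) := by
      funext i
      have h6 : ((e i : ℤ) : ℝ) = (((e i : ℚ)) : ℝ) := by push_cast; ring
      rw [h6, key i]
      push_cast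
      ring
    have hq1 : (1:ℝ) ≤ intQuadForm G e := hmin e hennz
    unfold intQuadForm at hq1
    rw [hscale, quad_smul] at hq1
    by_contra hneg
    push_neg at hneg
    have hd2 : (0:ℝ) < (d:ℝ) := by exact_mod_cast hdpos
    have hq2 : (d:ℝ) * ((d:ℝ) * ((fun i => ((q i : ℚ) : ℝ)) ⬝ᵥ G.mulVec (fun i => ((q i : ℚ) : ℝ)))) < 0 :=
      mul_neg_of_pos_of_neg hd2 (mul_neg_of_pos_of_neg hd2 hneg)
    linarith
  
lemma quad_nonneg (N : ℕ) (G : Matrix (Fin N) (Fin N) ℝ)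
    (hmin : ∀ e : Fin N → ℤ, e ≠ 0 → 1 ≤ intQuadForm G e) :
    ∀ x : Fin N → ℝ, 0 ≤ x ⬝ᵥ G.mulVec x := by
  intro x
  have hd : Dense (Set.pi Set.univ (fun _ : Fin N => Set.range ((↑) : ℚ → ℝ))) :=
    dense_pi Set.univ (fun i _ => Rat.denseRange_cast)
  have hclosed : IsClosed {y : Fin N → ℝ | 0 ≤ y ⬝ᵥ G.mulVec y} :=
    isClosed_le continuous_const (quad_cont N G)
  have hsub : Set.pi Set.univ (fun _ : Fin N => Set.range ((↑) : ℚ → ℝ))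
      ⊆ {y : Fin N → ℝ | 0 ≤ y ⬝ᵥ G.mulVec y} := by
    intro y hy
    choose qq hqq using fun i => hy i (Set.mem_univ i)
    have hyq : y = fun i => ((qq i : ℚ) : ℝ) := funext fun i => (hqq i).symm
    show 0 ≤ y ⬝ᵥ G.mulVec y
    rw [hyq]
    exact quad_nonneg_rat N G hmin qq
  have hx : x ∈ closure (Set.pi Set.univ (fun _ : Fin N => Set.range ((↑) : ℚ → ℝ))) := by
    rw [hd.closure_eq]; trivial
  exact closure_minimal hsub hclosed hx

lemma quad_BtB (N : ℕ) (B : Matrix (Fin N) (Fin N) ℝ) (x : Fin N → ℝ) :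
    x ⬝ᵥ (Bᵀ * B).mulVec x = ∑ i, (B.mulVec x i)^2 := by
  rw [← Matrix.mulVec_mulVec, Matrix.dotProduct_mulVec, Matrix.vecMul_transpose]
  simp [dotProduct, pow_two]

lemma trace_diag_mul (N : ℕ) (w : Fin N → ℝ) (M : Matrix (Fin N) (Fin N) ℝ) :
    (Matrix.diagonal w * M).trace = ∑ j, w j * M j j := by
  simp [Matrix.trace, Matrix.diag, Matrix.diagonal_mul]

lemma conj_diag_entry (N : ℕ) (U G : Matrix (Fin N) (Fin N) ℝ) (j : Fin N) :
    (U * G * Uᵀ) j j = (fun l => U j l) ⬝ᵥ G.mulVec (fun l => U j l) := by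
  simp only [Matrix.mul_apply, Matrix.transpose_apply, dotProduct, Matrix.mulVec,
    Finset.sum_mul, Finset.mul_sum]
  rw [Finset.sum_comm]
  exact Finset.sum_congr rfl fun p _ => Finset.sum_congr rfl fun q _ => by ring

lemma trace_conj (N : ℕ) (U G : Matrix (Fin N) (Fin N) ℝ) (hU : Uᵀ * U = 1) :
    (U * G * Uᵀ).trace = G.trace := by
  rw [Matrix.trace_mul_cycle, hU, one_mul]

end OGTB

/-- trace bound for the optimal Gram matrix. If `G ∈ R₁`
minimizes `h(G) = inf_U tr(S⁻² U G Uᵀ)` over `R₁`, then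
`tr(G) ≤ N (s₁ / (det S)^{1/N})²`. -/
theorem optimal_gram_trace_bound (N : ℕ) (hN : 0 < N)
    (s : Fin N → ℝ) (hs : ∀ j, 0 < s j) (hs_mono : Antitone s)
    (G : Matrix (Fin N) (Fin N) ℝ) (hG : G ∈ RyshkovOne N)
    (hopt : ∀ G' ∈ RyshkovOne N, orthInf s G ≤ orthInf s G') :
    G.trace ≤ (N : ℝ) *
      (s ⟨0, hN⟩ / (∏ j, s j) ^ ((1 : ℝ) / N)) ^ 2 := by
  classical
  obtain ⟨hGsym, hGmin⟩ := hG
  have hPSD : ∀ x : Fin N → ℝ, 0 ≤ x ⬝ᵥ G.mulVec x := OGTB.quad_nonneg N G hGmin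
  obtain ⟨z, hz_def⟩ : ∃ w : Fin N, w = ⟨0, hN⟩ := ⟨_, rfl⟩
  have hPpos : 0 < ∏ j, s j := Finset.prod_pos (fun j _ => hs j)
  obtain ⟨r, hr_def⟩ : ∃ x : ℝ, x = (∏ j, s j) ^ ((1:ℝ)/N) := ⟨_, rfl⟩
  have hrpos : 0 < r := by rw [hr_def]; exact Real.rpow_pos_of_pos hPpos _
  have hrn : r ^ (N:ℕ) = ∏ j, s j := by
    rw [hr_def, ← Real.rpow_natCast ((∏ j, s j) ^ ((1:ℝ)/N)) N, ← Real.rpow_mul hPpos.le]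
    rw [one_div, inv_mul_cancel₀ (by exact_mod_cast hN.ne' : (N:ℝ) ≠ 0), Real.rpow_one]
  have ht_pos : ∀ j, 0 < s j / r := fun j => div_pos (hs j) hrpos
  have ht_prod : ∏ j, s j / r = 1 := by
    rw [Finset.prod_div_distrib, Finset.prod_const, Finset.card_univ, Fintype.card_fin, hrn]
    exact div_self (ne_of_gt hPpos)
  obtain ⟨B, U, hBmin, hUo, hUd⟩ := OGTB.horn N (fun j => s j / r) ht_pos ht_prod
  have hG'R : Bᵀ * B ∈ RyshkovOne N := by
    constructor
    · show (Bᵀ * B)ᵀ = Bᵀ * B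
      rw [Matrix.transpose_mul, Matrix.transpose_transpose]
    · intro e he
      have hq : intQuadForm (Bᵀ * B) e = ∑ i, (B.mulVec (fun j => (e j:ℝ)) i)^2 :=
        OGTB.quad_BtB N B _
      rw [hq]
      exact hBmin e he
  -- upper bound for G' = BᵀB
  have hub : orthInf s (Bᵀ * B) ≤ (N:ℝ) / r^2 := by
    have hval : (Matrix.diagonal (fun j => 1 / (s j) ^ 2) * U * (Bᵀ * B) * Uᵀ).trace
        = (N:ℝ) / r^2 := by
      have h1 : Matrix.diagonal (fun j => 1 / (s j) ^ 2) * U * (Bᵀ * B) * Uᵀ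
          = Matrix.diagonal (fun j => 1 / (s j) ^ 2) * (U * (Bᵀ * B) * Uᵀ) := by
        simp only [Matrix.mul_assoc]
      rw [h1, hUd, Matrix.diagonal_mul_diagonal, Matrix.trace_diagonal]
      have h2 : ∀ j : Fin N, 1 / (s j)^2 * ((s j / r)^2) = 1/r^2 := by
        intro j
        have hsj : (s j)^2 ≠ 0 := pow_ne_zero 2 (ne_of_gt (hs j))
        have hr2 : r^2 ≠ 0 := pow_ne_zero 2 (ne_of_gt hrpos)
        rw [div_pow]
        field_simp
        exact div_self (ne_of_gt (hs j))
      calc ∑ j, 1 / (s j)^2 * ((s j / r)^2) = ∑ j : Fin N, 1/r^2 :=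
            Finset.sum_congr rfl (fun j _ => h2 j)
      _ = (N:ℝ) / r^2 := by
          rw [Finset.sum_const, Finset.card_univ, Fintype.card_fin, nsmul_eq_mul]
          ring
    apply csInf_le
    · refine ⟨0, ?_⟩
      rintro val ⟨U', hU', rfl⟩
      have h1 : Matrix.diagonal (fun j => 1 / (s j) ^ 2) * U' * (Bᵀ * B) * U'ᵀ
          = Matrix.diagonal (fun j => 1 / (s j) ^ 2) * (U' * (Bᵀ * B) * U'ᵀ) := by
        simp only [Matrix.mul_assoc]
      show (0:ℝ) ≤ ((Matrix.diagonal fun j => 1 / (s j) ^ 2) * U' * (Bᵀ * B) * U'ᵀ).trace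
      rw [h1, OGTB.trace_diag_mul]
      apply Finset.sum_nonneg
      intro j _
      apply mul_nonneg
      · positivity
      · rw [OGTB.conj_diag_entry, OGTB.quad_BtB]
        exact Finset.sum_nonneg fun i _ => sq_nonneg _
    · exact ⟨U, hUo, hval⟩
  -- lower bound for G
  have hzle : ∀ j : Fin N, (1:ℝ)/(s z)^2 ≤ 1/(s j)^2 := by
    intro j
    have hle : z ≤ j := by rw [hz_def]; exact Fin.mk_le_of_le_val (Nat.zero_le _)
    have h3 : s j ≤ s z := hs_mono hle
    have h4 : (s j)^2 ≤ (s z)^2 := pow_le_pow_left₀ (hs j).le h3 2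
    exact one_div_le_one_div_of_le (pow_pos (hs j) 2) h4
  have hlow : G.trace / (s z)^2 ≤ orthInf s G := by
    apply le_csInf
    · exact ⟨_, ⟨1, by simp, rfl⟩⟩
    · rintro val ⟨U', hU', rfl⟩
      show G.trace / (s z)^2 ≤ ((Matrix.diagonal fun j => 1 / (s j) ^ 2) * U' * G * U'ᵀ).trace
      have h1 : Matrix.diagonal (fun j => 1 / (s j) ^ 2) * U' * G * U'ᵀ
          = Matrix.diagonal (fun j => 1 / (s j) ^ 2) * (U' * G * U'ᵀ) := by
        simp only [Matrix.mul_assoc]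
      have hent : ∀ j : Fin N, 0 ≤ (U' * G * U'ᵀ) j j := by
        intro j
        rw [OGTB.conj_diag_entry]
        exact hPSD _
      have htr : ∑ j, (U' * G * U'ᵀ) j j = G.trace := by
        have := OGTB.trace_conj N U' G hU'
        rw [← this]
        simp [Matrix.trace, Matrix.diag]
      have hstep1 : G.trace / (s z)^2 = ∑ j, (1/(s z)^2) * ((U' * G * U'ᵀ) j j) := by
        rw [← Finset.mul_sum, htr, one_div, inv_mul_eq_div]
      have hstep2 : ∑ j, (1/(s z)^2) * ((U' * G * U'ᵀ) j j)
          ≤ ∑ j, (1/(s j)^2) * ((U' * G * U'ᵀ) j j) :=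
        Finset.sum_le_sum fun j _ => mul_le_mul_of_nonneg_right (hzle j) (hent j)
      have hstep3 : ((Matrix.diagonal fun j => 1 / (s j) ^ 2) * U' * G * U'ᵀ).trace
          = ∑ j, (1/(s j)^2) * ((U' * G * U'ᵀ) j j) := by
        rw [h1, OGTB.trace_diag_mul]
      rw [hstep1, hstep3]
      exact hstep2
  -- combine
  have hchain : G.trace / (s z)^2 ≤ (N:ℝ)/r^2 :=
    le_trans hlow (le_trans (hopt _ hG'R) hub)
  have hz2 : (0:ℝ) < (s z)^2 := pow_pos (hs z) 2
  rw [div_le_iff₀ hz2] at hchain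
  have hgoal : (N:ℝ) * (s z / r)^2 = (N:ℝ)/r^2 * (s z)^2 := by
    rw [div_pow]
    ring
  rw [← hz_def, ← hr_def, hgoal]
  exact hchain
end

section
/- The optimum is attained at an extreme point: let S be a real N×N diagonal matrix with positive diagonal entries, define h(G) := inf over orthogonal N×N matrices U of tr(S⁻² U G Uᵀ), and for c ≥ N let C := {G ∈ R₁ : tr(G) ≤ c}. Then C is a nonempty compact convex subset of the real symmetric N×N matrices, and there exists an extreme point G* of C such that h(G*) ≤ h(G) for all G ∈ C; i.e., the concave objective h attains its minimum over C at an extreme point of C. -/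
open Matrix

lemma intQuadForm_add {N : ℕ} (G H : Matrix (Fin N) (Fin N) ℝ) (e : Fin N → ℤ) :
    intQuadForm (G + H) e = intQuadForm G e + intQuadForm H e := by
  simp [intQuadForm, Matrix.add_mulVec, dotProduct_add]

lemma intQuadForm_smul {N : ℕ} (a : ℝ) (G : Matrix (Fin N) (Fin N) ℝ) (e : Fin N → ℤ) :
    intQuadForm (a • G) e = a * intQuadForm G e := by
  simp [intQuadForm, Matrix.smul_mulVec, dotProduct_smul]

lemma intQuadForm_one {N : ℕ} (e : Fin N → ℤ) (he : e ≠ 0) : 1 ≤ intQuadForm 1 e := by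
  have h : intQuadForm 1 e = ((∑ i, e i * e i : ℤ) : ℝ) := by
    simp [intQuadForm, Matrix.one_mulVec, dotProduct]
  rw [h]
  have h1 : (1 : ℤ) ≤ ∑ i, e i * e i := by
    obtain ⟨i₀, hi₀⟩ : ∃ i, e i ≠ 0 := by
      by_contra hall; push_neg at hall; exact he (funext hall)
    calc (1:ℤ) ≤ e i₀ * e i₀ := by rcases hi₀.lt_or_gt with h | h <;> nlinarith
      _ ≤ ∑ i, e i * e i :=
        Finset.single_le_sum (f := fun i => e i * e i)
          (fun i _ => mul_self_nonneg _) (Finset.mem_univ i₀)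
  exact_mod_cast h1

lemma cast_single {N : ℕ} (i : Fin N) (a : ℤ) :
    (fun k => ((Pi.single i a : Fin N → ℤ) k : ℝ)) = Pi.single i (a : ℝ) := by
  funext k; simp [Pi.single_apply, apply_ite (fun z : ℤ => (z : ℝ))]

lemma intQuadForm_single {N : ℕ} (G : Matrix (Fin N) (Fin N) ℝ) (i : Fin N) :
    intQuadForm G (Pi.single i 1) = G i i := by
  simp [intQuadForm, cast_single, Matrix.mulVec_single, single_dotProduct]

lemma intQuadForm_pair {N : ℕ} (G : Matrix (Fin N) (Fin N) ℝ) (i j : Fin N) (y : ℤ) :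
    intQuadForm G (Pi.single i 1 + Pi.single j y)
      = G i i + (y:ℝ) * G i j + ((y:ℝ) * G j i + (y:ℝ) * ((y:ℝ) * G j j)) := by
  have hc : (fun k => (((Pi.single i 1 + Pi.single j y : Fin N → ℤ)) k : ℝ))
      = Pi.single i (1:ℝ) + Pi.single j (y:ℝ) := by
    funext k; simp [Pi.single_apply, apply_ite (fun z : ℤ => (z : ℝ))]
  simp only [intQuadForm, hc]
  simp [Matrix.mulVec_add, dotProduct_add, add_dotProduct, Matrix.mulVec_single,
    single_dotProduct, mul_comm, mul_left_comm]
  ring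

lemma one_mem_C {N : ℕ} {c : ℝ} (hc : (N:ℝ) ≤ c) :
    (1 : Matrix (Fin N) (Fin N) ℝ) ∈ {G ∈ RyshkovOne N | G.trace ≤ c} := by
  refine ⟨⟨Matrix.isSymm_one, fun e he => intQuadForm_one e he⟩, ?_⟩
  simp [Matrix.trace_one, hc]

lemma convex_C {N : ℕ} {c : ℝ} :
    Convex ℝ {G ∈ RyshkovOne N | G.trace ≤ c} := by
  rintro x ⟨⟨hxs, hxq⟩, hxt⟩ y ⟨⟨hys, hyq⟩, hyt⟩ a b ha hb hab
  refine ⟨⟨?_, fun e he => ?_⟩, ?_⟩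
  · simp only [Matrix.IsSymm] at *
    simp [Matrix.transpose_add, Matrix.transpose_smul, hxs, hys]
  · rw [intQuadForm_add, intQuadForm_smul, intQuadForm_smul]
    calc (1:ℝ) = a * 1 + b * 1 := by linarith
      _ ≤ a * intQuadForm x e + b * intQuadForm y e := by
          have := hxq e he; have := hyq e he
          have h1 : a * 1 ≤ a * intQuadForm x e := by nlinarith
          have h2 : b * 1 ≤ b * intQuadForm y e := by nlinarith
          linarith
  · rw [Matrix.trace_add, Matrix.trace_smul, Matrix.trace_smul]
    simp only [smul_eq_mul]
    have hcc : a * c + b * c = c := by rw [← add_mul, hab, one_mul]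
    nlinarith [mul_nonneg ha (sub_nonneg.2 hxt), mul_nonneg hb (sub_nonneg.2 hyt)]

lemma isClosed_C {N : ℕ} {c : ℝ} :
    IsClosed {G ∈ RyshkovOne N | G.trace ≤ c} := by
  have heq : {G ∈ RyshkovOne N | G.trace ≤ c}
      = ({G : Matrix (Fin N) (Fin N) ℝ | Gᵀ = G}
        ∩ ⋂ (e : Fin N → ℤ) (_ : e ≠ 0), {G | 1 ≤ intQuadForm G e})
        ∩ {G | G.trace ≤ c} := by
    ext G
    simp only [RyshkovOne, Set.mem_setOf_eq, Set.mem_sep_iff, Set.mem_inter_iff,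
      Set.mem_iInter, Matrix.IsSymm]
  rw [heq]
  refine IsClosed.inter (IsClosed.inter ?_ ?_) ?_
  · exact isClosed_eq (continuous_id.matrix_transpose) continuous_id
  · refine isClosed_iInter fun e => isClosed_iInter fun _ => ?_
    exact isClosed_le continuous_const
      (Continuous.dotProduct continuous_const
        (continuous_id.matrix_mulVec continuous_const))
  · exact isClosed_le (continuous_id.matrix_trace) continuous_const

lemma entry_bounds {N : ℕ} {c : ℝ} (hc : (N:ℝ) ≤ c) {G : Matrix (Fin N) (Fin N) ℝ}
    (hG : G ∈ {G ∈ RyshkovOne N | G.trace ≤ c}) :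
    ∀ i j, G i j ∈ Set.Icc (-c) c := by
  obtain ⟨⟨hsym, hq⟩, htr⟩ := hG
  have hc0 : (0:ℝ) ≤ c := le_trans (Nat.cast_nonneg N) hc
  have hd : ∀ i, 1 ≤ G i i := by
    intro i
    have := hq (Pi.single i 1) (by
      intro h
      have := congrFun h i
      simp at this)
    rwa [intQuadForm_single] at this
  have hdle : ∀ i, G i i ≤ c := by
    intro i
    have h1 : G i i ≤ ∑ j, G j j :=
      Finset.single_le_sum (f := fun j => G j j)
        (fun j _ => le_trans zero_le_one (hd j)) (Finset.mem_univ i)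
    exact le_trans h1 htr
  intro i j
  by_cases hij : i = j
  · subst hij
    exact ⟨le_trans (by linarith) (hd i), hdle i⟩
  · have hne : ∀ y : ℤ, (Pi.single i 1 + Pi.single j y : Fin N → ℤ) ≠ 0 := by
      intro y h
      have := congrFun h i
      simp [Pi.single_apply, hij] at this
    have hsymm : G j i = G i j := hsym.apply i j
    have h₁ := hq _ (hne 1)
    have h₂ := hq _ (hne (-1))
    rw [intQuadForm_pair] at h₁ h₂
    push_cast at h₁ h₂
    rw [hsymm] at h₁ h₂
    constructor <;> nlinarith [hdle i, hdle j]

lemma isCompact_box {N : ℕ} (M : ℝ) :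
    IsCompact {G : Matrix (Fin N) (Fin N) ℝ | ∀ i j, G i j ∈ Set.Icc (-M) M} := by
  have h1 : IsCompact (Set.univ.pi fun _ : Fin N =>
      (Set.univ.pi fun _ : Fin N => Set.Icc (-M) M : Set (Fin N → ℝ))) :=
    isCompact_univ_pi fun _ => isCompact_univ_pi fun _ => isCompact_Icc
  have h2 : {G : Matrix (Fin N) (Fin N) ℝ | ∀ i j, G i j ∈ Set.Icc (-M) M}
      = Set.univ.pi fun _ : Fin N =>
        (Set.univ.pi fun _ : Fin N => Set.Icc (-M) M : Set (Fin N → ℝ)) := by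
    ext G
    exact ⟨fun h i _ j _ => h i j, fun h i j => h i trivial j trivial⟩
  rw [h2]; exact h1

lemma isCompact_C {N : ℕ} {c : ℝ} (hc : (N:ℝ) ≤ c) :
    IsCompact {G ∈ RyshkovOne N | G.trace ≤ c} :=
  (isCompact_box c).of_isClosed_subset isClosed_C fun _ hG => entry_bounds hc hG

lemma isCompact_orth {N : ℕ} :
    IsCompact {U : Matrix (Fin N) (Fin N) ℝ | Uᵀ * U = 1} := by
  refine (isCompact_box 1).of_isClosed_subset
    (isClosed_eq ((continuous_id.matrix_transpose).matrix_mul continuous_id)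
      continuous_const) ?_
  intro U hU i j
  have hdiag : ∑ k, U k j * U k j = 1 := by
    have := congrFun (congrFun hU j) j
    simpa [Matrix.mul_apply, Matrix.transpose_apply, Matrix.one_apply] using this
  have hle : U i j * U i j ≤ 1 := by
    rw [← hdiag]
    exact Finset.single_le_sum (f := fun k => U k j * U k j)
      (fun k _ => mul_self_nonneg _) (Finset.mem_univ i)
  constructor <;> nlinarith

instance locallyConvexMatrix {N : ℕ} : LocallyConvexSpace ℝ (Matrix (Fin N) (Fin N) ℝ) :=
  inferInstanceAs (LocallyConvexSpace ℝ ((Fin N) → (Fin N) → ℝ))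

lemma cont_traceForm {N : ℕ} (D U : Matrix (Fin N) (Fin N) ℝ) :
    Continuous fun G : Matrix (Fin N) (Fin N) ℝ => (D * U * G * Uᵀ).trace :=
  ((continuous_const.matrix_mul continuous_id).matrix_mul
    continuous_const).matrix_trace

/-- The linear functional `G ↦ -tr(D U G Uᵀ)` as a continuous linear map. -/
noncomputable def negTraceForm {N : ℕ} (D U : Matrix (Fin N) (Fin N) ℝ) :
    Matrix (Fin N) (Fin N) ℝ →L[ℝ] ℝ where
  toFun G := -(D * U * G * Uᵀ).trace
  map_add' G H := by
    simp [Matrix.mul_add, Matrix.add_mul, Matrix.trace_add]; ring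
  map_smul' a G := by
    simp [Matrix.mul_smul, Matrix.smul_mul, Matrix.trace_smul, smul_eq_mul]
  cont := (cont_traceForm D U).neg

/-- the optimum is attained at an extreme point. The truncated
Ryshkov polytope `C = {G ∈ R₁ : tr G ≤ c}` (with `c ≥ N`) is a nonempty compact
convex set, and the concave objective `h` attains its minimum over `C` at an
extreme point of `C`. -/
theorem optimum_at_extreme_point (N : ℕ) (s : Fin N → ℝ) (hs : ∀ j, 0 < s j)
    (c : ℝ) (hc : (N : ℝ) ≤ c) :
    (({G ∈ RyshkovOne N | G.trace ≤ c} : Set (Matrix (Fin N) (Fin N) ℝ)).Nonempty ∧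
      IsCompact {G ∈ RyshkovOne N | G.trace ≤ c} ∧
      Convex ℝ {G ∈ RyshkovOne N | G.trace ≤ c}) ∧
    ∃ Gstar ∈ ({G ∈ RyshkovOne N | G.trace ≤ c} : Set (Matrix (Fin N) (Fin N) ℝ)).extremePoints ℝ,
      ∀ G ∈ {G ∈ RyshkovOne N | G.trace ≤ c}, orthInf s Gstar ≤ orthInf s G := by
  set C := {G ∈ RyshkovOne N | G.trace ≤ c} with hCdef
  have hCne : C.Nonempty := ⟨1, one_mem_C hc⟩
  have hCcomp : IsCompact C := isCompact_C hc
  have hCconv : Convex ℝ C := convex_C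
  refine ⟨⟨hCne, hCcomp, hCconv⟩, ?_⟩
  set O := {U : Matrix (Fin N) (Fin N) ℝ | Uᵀ * U = 1} with hOdef
  have hOne : (1 : Matrix (Fin N) (Fin N) ℝ) ∈ O := by simp [hOdef]
  set D := Matrix.diagonal (fun j => 1 / (s j) ^ 2) with hDdef
  set f : Matrix (Fin N) (Fin N) ℝ × Matrix (Fin N) (Fin N) ℝ → ℝ :=
    fun p => (D * p.1 * p.2 * p.1ᵀ).trace with hfdef
  have hfcont : Continuous f := by
    exact (((continuous_const.matrix_mul continuous_fst).matrix_mul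
      continuous_snd).matrix_mul (continuous_fst.matrix_transpose)).matrix_trace
  obtain ⟨p, hp, hpmin⟩ := (isCompact_orth.prod hCcomp).exists_isMinOn
    ⟨(1, 1), hOne, one_mem_C hc⟩ hfcont.continuousOn
  rw [isMinOn_iff] at hpmin
  have hpO : p.1 ∈ O := hp.1
  have hpC : p.2 ∈ C := hp.2
  -- every value of the objective at any (U, G) in O ×ˢ C dominates f p
  have hmin : ∀ U ∈ O, ∀ G ∈ C, f p ≤ f (U, G) := fun U hU G hG =>
    hpmin (U, G) ⟨hU, hG⟩
  -- key facts about orthInf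
  have horth_bdd : ∀ G ∈ C, BddBelow ((fun U : Matrix (Fin N) (Fin N) ℝ =>
      (D * U * G * Uᵀ).trace) '' O) := by
    intro G hG
    refine ⟨f p, ?_⟩
    rintro r ⟨U, hU, rfl⟩
    exact hmin U hU G hG
  have horth_le : ∀ G ∈ C, orthInf s G ≤ f (p.1, G) := by
    intro G hG
    exact csInf_le (horth_bdd G hG) ⟨p.1, hpO, rfl⟩
  have horth_ge : ∀ G ∈ C, f p ≤ orthInf s G := by
    intro G hG
    refine le_csInf ⟨_, ⟨1, hOne, rfl⟩⟩ ?_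
    rintro r ⟨U, hU, rfl⟩
    exact hmin U hU G hG
  -- the exposed face of minimizers of G ↦ f (p.1, G)
  set l := negTraceForm D p.1 with hldef
  set t := {x ∈ C | ∀ y ∈ C, l y ≤ l x} with htdef
  have hexp : IsExposed ℝ C t := fun _ => ⟨l, rfl⟩
  have hlval : ∀ G, l G = -(f (p.1, G)) := fun G => rfl
  have hpt : p.2 ∈ t := by
    refine ⟨hpC, fun y hy => ?_⟩
    rw [hlval, hlval]
    have h1 : f p ≤ f (p.1, y) := hmin p.1 hpO y hy
    have h2 : f (p.1, p.2) = f p := by rw [Prod.mk.eta]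
    rw [h2]
    linarith
  have htcomp : IsCompact t := hexp.isCompact hCcomp
  obtain ⟨x, hx⟩ := htcomp.extremePoints_nonempty ⟨p.2, hpt⟩
  refine ⟨x, hexp.isExtreme.extremePoints_subset_extremePoints hx, ?_⟩
  intro G hG
  have hxt : x ∈ t := hx.1
  have hxC : x ∈ C := hxt.1
  have h1 : orthInf s x ≤ f (p.1, x) := horth_le x hxC
  have h2 : f (p.1, x) ≤ f p := by
    have := hxt.2 p.2 hpC
    rw [hlval, hlval] at this
    have h2' : f (p.1, p.2) = f p := by rw [Prod.mk.eta]
    linarith [this, h2'.ge]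
  have h3 : f p ≤ orthInf s G := horth_ge G hG
  linarith
end
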